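/- arXiv:2103.02890 — 3 statements merged into one kernel-verified Lean document; each statement's English description precedes it below -/
import Mathlib

section
/- Let s > 0 and let μ be a finite positive Borel measure on the open unit ball B_n of ℂ^n such that μ(B_δ(ζ)) ≤ C δ^{ns} for all ζ on the unit sphere and all δ > 0, where B_δ(ζ) = {z ∈ B_n : |1 - ⟨z,ζ⟩| < δ}. Then for every t > 0 there is a constant C' such that sup_{a ∈ B_n} ∫_{B_n} (1-|a|²)^t / |1 - ⟨a,z⟩|^{ns+t} dμ(z) ≤ C'. -/
open MeasureTheory
open scoped ENNReal

/-- The Euclidean norm on `ℂⁿ`. -/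
noncomputable def eNorm {n : ℕ} (z : Fin n → ℂ) : ℝ :=
  Real.sqrt (∑ i, ‖z i‖ ^ 2)

/-- The standard Hermitian inner product `⟨z,w⟩ = ∑ z_j conj(w_j)` on `ℂⁿ`. -/
noncomputable def hInner {n : ℕ} (z w : Fin n → ℂ) : ℂ :=
  ∑ i, z i * (starRingEnd ℂ) (w i)

lemma eNorm_eq_norm {n : ℕ} (z : Fin n → ℂ) :
    eNorm z = ‖(WithLp.toLp 2 z : EuclideanSpace ℂ (Fin n))‖ := by
  rw [EuclideanSpace.norm_eq]
  simp [eNorm]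

lemma hInner_eq_inner {n : ℕ} (z w : Fin n → ℂ) :
    hInner z w = inner ℂ (WithLp.toLp 2 w : EuclideanSpace ℂ (Fin n)) (WithLp.toLp 2 z : EuclideanSpace ℂ (Fin n)) := by
  rw [PiLp.inner_apply]
  simp [hInner, RCLike.inner_apply, mul_comm]

lemma eNorm_nonneg {n : ℕ} (z : Fin n → ℂ) : 0 ≤ eNorm z := Real.sqrt_nonneg _

lemma abs_hInner_le {n : ℕ} (z w : Fin n → ℂ) :
    ‖hInner z w‖ ≤ eNorm z * eNorm w := by
  rw [hInner_eq_inner, eNorm_eq_norm, eNorm_eq_norm, mul_comm]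
  exact norm_inner_le_norm _ _

lemma eNorm_eq_zero {n : ℕ} {z : Fin n → ℂ} (h : eNorm z = 0) : z = 0 := by
  rw [eNorm_eq_norm] at h
  have := norm_eq_zero.mp h
  simpa using this

lemma hInner_conj {n : ℕ} (z w : Fin n → ℂ) :
    (starRingEnd ℂ) (hInner z w) = hInner w z := by
  simp [hInner, map_sum, mul_comm]

lemma abs_one_sub_hInner_symm {n : ℕ} (z w : Fin n → ℂ) :
    ‖1 - hInner z w‖ = ‖1 - hInner w z‖ := by
  rw [← hInner_conj w z, show (1:ℂ) - (starRingEnd ℂ) (hInner w z)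
    = (starRingEnd ℂ) (1 - hInner w z) by rw [map_sub, map_one], Complex.norm_conj]

lemma hInner_smul {n : ℕ} (c : ℝ) (a z : Fin n → ℂ) :
    hInner ((c : ℂ) • a) z = (c : ℂ) * hInner a z := by
  simp [hInner, Finset.mul_sum, mul_assoc]

lemma eNorm_smul {n : ℕ} (c : ℝ) (hc : 0 ≤ c) (z : Fin n → ℂ) :
    eNorm ((c : ℂ) • z) = c * eNorm z := by
  simp only [eNorm, Pi.smul_apply, smul_eq_mul, norm_mul, mul_pow, ← Finset.mul_sum,
    Complex.norm_real, Real.norm_eq_abs, abs_of_nonneg hc]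
  rw [Real.sqrt_mul (by positivity)]
  congr 1
  exact Real.sqrt_sq hc

lemma continuous_eNorm {n : ℕ} : Continuous (eNorm (n := n)) := by
  unfold eNorm
  exact Real.continuous_sqrt.comp (by continuity)

lemma continuous_hInner {n : ℕ} (w : Fin n → ℂ) : Continuous (fun z => hInner z w) := by
  unfold hInner
  continuity

lemma measurable_ball {n : ℕ} : MeasurableSet {z : Fin n → ℂ | eNorm z < 1} :=
  measurableSet_lt continuous_eNorm.measurable measurable_const

lemma measurable_Aset {n : ℕ} (ζ : Fin n → ℂ) (δ : ℝ) :
    MeasurableSet {z : Fin n → ℂ | eNorm z < 1 ∧ ‖1 - hInner z ζ‖ < δ} := by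
  apply MeasurableSet.inter measurable_ball
  exact measurableSet_lt (continuous_norm.comp
    (continuous_const.sub (continuous_hInner ζ))).measurable measurable_const

lemma exists_dyadic {r u : ℝ} (hr : 0 < r) (hu : r ≤ u) :
    ∃ k : ℕ, u < 2 ^ k * r ∧ (2:ℝ) ^ k * r ≤ 2 * u := by
  set v := u / r with hv
  have hv1 : 1 ≤ v := (one_le_div hr).mpr hu
  have hfl : 1 ≤ ⌊v⌋₊ := Nat.le_floor (by exact_mod_cast hv1)
  set m := Nat.log 2 ⌊v⌋₊ with hm
  refine ⟨m + 1, ?_, ?_⟩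
  · have h3 : (⌊v⌋₊ : ℕ) + 1 ≤ 2 ^ (m + 1) :=
      Nat.lt_pow_succ_log_self (b := 2) (by norm_num) ⌊v⌋₊
    have h1 : v < ((2:ℕ) ^ (m + 1) : ℕ) := by
      calc v < (⌊v⌋₊ : ℝ) + 1 := Nat.lt_floor_add_one v
        _ ≤ ((2 ^ (m+1) : ℕ) : ℝ) := by exact_mod_cast h3
    rw [← div_lt_iff₀ hr]
    calc u / r = v := rfl
      _ < ((2:ℕ) ^ (m+1) : ℕ) := h1
      _ = (2:ℝ) ^ (m+1) := by push_cast; ring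
  · have h1 : ((2:ℕ) ^ m : ℕ) ≤ ⌊v⌋₊ := Nat.pow_log_le_self 2 (by omega)
    have h2 : ((2:ℝ) ^ m) ≤ v := by
      calc ((2:ℝ) ^ m) = ((2^m : ℕ) : ℝ) := by push_cast; ring
        _ ≤ (⌊v⌋₊ : ℝ) := by exact_mod_cast h1
        _ ≤ v := Nat.floor_le (by linarith)
    have h4 : (2:ℝ) ^ (m+1) ≤ 2 * v := by rw [pow_succ]; nlinarith
    calc (2:ℝ) ^ (m+1) * r ≤ 2 * v * r := by nlinarith
      _ = 2 * u := by rw [hv, mul_assoc, div_mul_cancel₀ u hr.ne']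

lemma rpow_id1 {r t ns : ℝ} (hr : 0 < r) (k : ℕ) :
    (2*r) ^ t / ((2 ^ k * r / 2) ^ (ns + t)) =
      (2:ℝ) ^ (ns + 2*t) * r ^ (-ns) * ((2:ℝ) ^ (-(ns+t))) ^ k := by
  have h2 : (0:ℝ) < 2 := two_pos
  have hp : (0:ℝ) < (2:ℝ) ^ k := by positivity
  rw [Real.mul_rpow h2.le hr.le, Real.div_rpow (by positivity) h2.le,
    Real.mul_rpow hp.le hr.le, ← Real.rpow_natCast 2 k, ← Real.rpow_mul h2.le,
    ← Real.rpow_natCast ((2:ℝ) ^ (-(ns+t))) k, ← Real.rpow_mul h2.le]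
  rw [Real.rpow_def_of_pos h2, Real.rpow_def_of_pos h2, Real.rpow_def_of_pos h2,
    Real.rpow_def_of_pos h2, Real.rpow_def_of_pos h2, Real.rpow_def_of_pos hr,
    Real.rpow_def_of_pos hr, Real.rpow_def_of_pos hr]
  simp only [div_eq_mul_inv, mul_inv, ← Real.exp_neg, ← Real.exp_add]
  rw [Real.exp_eq_exp]
  ring

lemma rpow_id2 {r t ns : ℝ} (hr : 0 < r) (k : ℕ) :
    ((2:ℝ) ^ (ns + 2*t) * r ^ (-ns) * ((2:ℝ) ^ (-(ns+t))) ^ k) * (((2:ℝ) ^ (k+1) * r) ^ ns) =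
      (2:ℝ) ^ (2*ns + 2*t) * ((2:ℝ) ^ (-t)) ^ k := by
  have h2 : (0:ℝ) < 2 := two_pos
  have hp : (0:ℝ) < (2:ℝ) ^ (k+1) := by positivity
  rw [Real.mul_rpow hp.le hr.le, ← Real.rpow_natCast 2 (k+1), ← Real.rpow_mul h2.le,
    ← Real.rpow_natCast ((2:ℝ) ^ (-(ns+t))) k, ← Real.rpow_mul h2.le,
    ← Real.rpow_natCast ((2:ℝ) ^ (-t)) k, ← Real.rpow_mul h2.le]
  rw [Real.rpow_def_of_pos h2, Real.rpow_def_of_pos h2, Real.rpow_def_of_pos h2,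
    Real.rpow_def_of_pos h2, Real.rpow_def_of_pos h2, Real.rpow_def_of_pos hr,
    Real.rpow_def_of_pos hr]
  simp only [← Real.exp_add]
  rw [Real.exp_eq_exp]
  push_cast
  ring

/-- If `μ` is a finite positive Borel measure on the unit ball `B_n` of `ℂⁿ` with
`μ(B_δ(ζ)) ≤ C δ^{ns}` for all unit vectors `ζ` and `δ > 0`, then for every `t > 0`,
`sup_{a ∈ B_n} ∫ (1-|a|²)^t / |1-⟨a,z⟩|^{ns+t} dμ(z) < ∞`. -/
theorem stmt0 (n : ℕ) (hn : 0 < n) (s : ℝ) (hs : 0 < s)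
    (μ : Measure (Fin n → ℂ)) [IsFiniteMeasure μ]
    (C : ℝ) (hC : 0 < C)
    (hCar : ∀ ζ : Fin n → ℂ, eNorm ζ = 1 → ∀ δ : ℝ, 0 < δ →
      μ {z | eNorm z < 1 ∧ ‖1 - hInner z ζ‖ < δ} ≤
        ENNReal.ofReal (C * δ ^ ((n : ℝ) * s))) :
    ∀ t : ℝ, 0 < t → ∃ C' : ℝ, 0 < C' ∧
      ∀ a : Fin n → ℂ, eNorm a < 1 →
        ∫⁻ z in {z : Fin n → ℂ | eNorm z < 1},
            ENNReal.ofReal ((1 - eNorm a ^ 2) ^ t /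
              ‖1 - hInner a z‖ ^ ((n : ℝ) * s + t)) ∂μ
          ≤ ENNReal.ofReal C' := by
  intro t ht
  set ns : ℝ := (n : ℝ) * s with hns_def
  have hnpos : (0:ℝ) < n := by exact_mod_cast hn
  have hns : 0 < ns := mul_pos hnpos hs
  set q : ℝ := (2:ℝ) ^ (-t) with hq_def
  have hq0 : 0 < q := Real.rpow_pos_of_pos two_pos _
  have hq1 : q < 1 := Real.rpow_lt_one_of_one_lt_of_neg one_lt_two (neg_lt_zero.mpr ht)
  have hq1' : 0 < 1 - q := sub_pos.mpr hq1
  refine ⟨C * (2:ℝ) ^ (2*ns + 2*t) * (1 - q)⁻¹, by positivity, ?_⟩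
  intro a ha
  set r : ℝ := 1 - eNorm a with hr_def
  have hr : 0 < r := sub_pos.mpr ha
  have ha0 : 0 ≤ eNorm a := eNorm_nonneg a
  -- choose a unit vector ζ adapted to a
  obtain ⟨ζ, hζ1, hζkey⟩ : ∃ ζ : Fin n → ℂ, eNorm ζ = 1 ∧ ∀ z : Fin n → ℂ, eNorm z < 1 →
      ‖1 - hInner z ζ‖ ≤ ‖1 - hInner a z‖ + r := by
    by_cases h0 : eNorm a = 0
    · have ha' : a = 0 := eNorm_eq_zero h0
      set ζ0 : Fin n → ℂ := fun i => if i = (⟨0, hn⟩ : Fin n) then 1 else 0 with hζ0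
      have hζ0n : eNorm ζ0 = 1 := by
        rw [eNorm]
        have h : ∀ i : Fin n, ‖ζ0 i‖ ^ 2
            = if i = (⟨0, hn⟩ : Fin n) then (1:ℝ) else 0 := by
          intro i; by_cases h : i = ⟨0, hn⟩ <;> simp [hζ0, h]
        rw [Finset.sum_congr rfl fun i _ => h i,
          Finset.sum_ite_eq' Finset.univ _ (fun _ => (1:ℝ))]
        simp
      refine ⟨ζ0, hζ0n, ?_⟩
      intro z hz
      have h1 : ‖1 - hInner z ζ0‖ ≤ 1 + ‖hInner z ζ0‖ := by
        simpa using norm_sub_le (1:ℂ) (hInner z ζ0)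
      have h2 : ‖hInner z ζ0‖ ≤ eNorm z * eNorm ζ0 := abs_hInner_le z ζ0
      have h3 : hInner a z = 0 := by simp [ha', hInner]
      have h4 : eNorm z * eNorm ζ0 ≤ 1 := by rw [hζ0n, mul_one]; exact hz.le
      rw [h3, sub_zero, norm_one, hr_def, h0]
      linarith
    · refine ⟨((eNorm a)⁻¹ : ℝ) • a, ?_, ?_⟩
      · have : ((((eNorm a)⁻¹ : ℝ) : ℂ)) • a = (((eNorm a)⁻¹ : ℝ) : ℂ) • a := rfl
        rw [show (((eNorm a)⁻¹ : ℝ) • a : Fin n → ℂ) = ((((eNorm a)⁻¹ : ℝ) : ℂ)) • a by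
          funext i; simp [Complex.real_smul]]
        rw [eNorm_smul _ (inv_nonneg.mpr ha0)]
        field_simp
      · intro z hz
        set ζ : Fin n → ℂ := ((eNorm a)⁻¹ : ℝ) • a with hζ
        have hζc : ζ = ((((eNorm a)⁻¹ : ℝ) : ℂ)) • a := by
          funext i; simp [hζ, Complex.real_smul]
        have hζn : eNorm ζ = 1 := by
          rw [hζc, eNorm_smul _ (inv_nonneg.mpr ha0)]; field_simp
        have haζ : ((eNorm a : ℝ) : ℂ) • ζ = a := by
          rw [hζc, smul_smul]
          have : ((eNorm a : ℝ) : ℂ) * (((eNorm a)⁻¹ : ℝ) : ℂ) = 1 := by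
            rw [← Complex.ofReal_mul]
            rw [mul_inv_cancel₀ h0]
            simp
          rw [this, one_smul]
        have hioz : hInner a z = ((eNorm a : ℝ) : ℂ) * hInner ζ z := by
          conv_lhs => rw [← haζ]
          rw [hInner_smul]
        rw [abs_one_sub_hInner_symm z ζ]
        have heq : (1:ℂ) - hInner ζ z
            = (1 - hInner a z) - ((1:ℂ) - ((eNorm a : ℝ) : ℂ)) * hInner ζ z := by
          rw [hioz]; ring
        have h1 : ‖1 - hInner ζ z‖
            ≤ ‖1 - hInner a z‖
              + ‖((1:ℂ) - ((eNorm a : ℝ) : ℂ)) * hInner ζ z‖ := by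
          rw [heq]
          have := norm_sub_le ((1:ℂ) - hInner a z) (((1:ℂ) - ((eNorm a : ℝ) : ℂ)) * hInner ζ z)
          simpa using this
        have h2 : ‖(1:ℂ) - ((eNorm a : ℝ) : ℂ)‖ = r := by
          rw [show (1:ℂ) - ((eNorm a : ℝ) : ℂ) = ((r : ℝ) : ℂ) by
            rw [hr_def]; push_cast; ring]
          rw [Complex.norm_real, Real.norm_eq_abs, abs_of_nonneg hr.le]
        have h3 : ‖hInner ζ z‖ ≤ 1 := by
          have := abs_hInner_le ζ z
          rw [hζn, one_mul] at this
          exact this.trans hz.le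
        calc ‖1 - hInner ζ z‖
            ≤ ‖1 - hInner a z‖
              + ‖(1:ℂ) - ((eNorm a : ℝ) : ℂ)‖ * ‖hInner ζ z‖ := by
              rw [← norm_mul] ; exact h1
          _ ≤ ‖1 - hInner a z‖ + r * 1 := by
              rw [h2]
              exact add_le_add_right (mul_le_mul_of_nonneg_left h3 hr.le) _
          _ = ‖1 - hInner a z‖ + r := by ring
  -- lower bound for |1 - ⟨a,z⟩|
  have hdlow : ∀ z : Fin n → ℂ, eNorm z < 1 → r ≤ ‖1 - hInner a z‖ := by
    intro z hz
    have h1 : ‖hInner a z‖ ≤ eNorm a * eNorm z := abs_hInner_le a z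
    have h2 : eNorm a * eNorm z ≤ eNorm a := by nlinarith [eNorm_nonneg z]
    have h3 : 1 - ‖hInner a z‖ ≤ ‖1 - hInner a z‖ := by
      have := norm_sub_norm_le (1:ℂ) (hInner a z)
      simpa using this
    rw [hr_def]; linarith
  -- the dyadic sets and constants
  set A : ℕ → Set (Fin n → ℂ) := fun k =>
    {z | eNorm z < 1 ∧ ‖1 - hInner z ζ‖ < 2 ^ (k+1) * r} with hA
  set b : ℕ → ℝ := fun k => (2:ℝ) ^ (ns + 2*t) * r ^ (-ns) * ((2:ℝ) ^ (-(ns+t))) ^ k with hb_def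
  have hb0 : ∀ k, 0 ≤ b k := by
    intro k
    have : (0:ℝ) < (2:ℝ) ^ (ns + 2*t) := Real.rpow_pos_of_pos two_pos _
    have : (0:ℝ) < r ^ (-ns) := Real.rpow_pos_of_pos hr _
    have : (0:ℝ) < (2:ℝ) ^ (-(ns+t)) := Real.rpow_pos_of_pos two_pos _
    positivity
  -- pointwise bound
  have hpt : ∀ z ∈ {z : Fin n → ℂ | eNorm z < 1},
      ENNReal.ofReal ((1 - eNorm a ^ 2) ^ t / ‖1 - hInner a z‖ ^ (ns + t))
        ≤ ∑' k, Set.indicator (A k) (fun _ => ENNReal.ofReal (b k)) z := by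
    intro z hz
    simp only [Set.mem_setOf_eq] at hz
    set d : ℝ := ‖1 - hInner a z‖ with hd_def
    have hrd : r ≤ d := hdlow z hz
    have hd0 : 0 < d := lt_of_lt_of_le hr hrd
    obtain ⟨k, hk1, hk2⟩ := exists_dyadic hr hrd
    refine le_trans ?_ (ENNReal.le_tsum k)
    have h2k1 : (1:ℝ) ≤ 2 ^ k := one_le_pow₀ one_le_two
    have hzA : z ∈ A k := by
      refine ⟨hz, ?_⟩
      have h1 := hζkey z hz
      have h2 : (2:ℝ) ^ (k+1) * r = 2 ^ k * r + 2 ^ k * r := by ring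
      have h3 : r ≤ 2 ^ k * r := by nlinarith
      rw [h2]
      calc ‖1 - hInner z ζ‖ ≤ d + r := h1
        _ < 2 ^ k * r + 2 ^ k * r := by
            have : d < 2 ^ k * r := hk1
            linarith
    rw [Set.indicator_of_mem hzA]
    apply ENNReal.ofReal_le_ofReal
    have hnum : 1 - eNorm a ^ 2 ≤ 2 * r := by nlinarith
    have hnum0 : 0 < 1 - eNorm a ^ 2 := by nlinarith
    have h1 : (1 - eNorm a ^ 2) ^ t ≤ (2*r) ^ t :=
      Real.rpow_le_rpow hnum0.le hnum ht.le
    have hdl : 2 ^ k * r / 2 ≤ d := (div_le_iff₀ two_pos).mpr (by linarith)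
    have h2 : (2 ^ k * r / 2) ^ (ns + t) ≤ d ^ (ns + t) :=
      Real.rpow_le_rpow (by positivity) hdl (by positivity)
    calc (1 - eNorm a ^ 2) ^ t / d ^ (ns + t)
        ≤ (2*r) ^ t / ((2 ^ k * r / 2) ^ (ns + t)) :=
          div_le_div₀ (by positivity) h1 (by positivity) h2
      _ = b k := rpow_id1 hr k
  -- put it together
  calc ∫⁻ z in {z : Fin n → ℂ | eNorm z < 1},
        ENNReal.ofReal ((1 - eNorm a ^ 2) ^ t / ‖1 - hInner a z‖ ^ (ns + t)) ∂μ
      ≤ ∫⁻ z in {z : Fin n → ℂ | eNorm z < 1},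
          ∑' k, Set.indicator (A k) (fun _ => ENNReal.ofReal (b k)) z ∂μ :=
        setLIntegral_mono' measurable_ball hpt
    _ ≤ ∫⁻ z, ∑' k, Set.indicator (A k) (fun _ => ENNReal.ofReal (b k)) z ∂μ :=
        setLIntegral_le_lintegral _ _
    _ = ∑' k, ∫⁻ z, Set.indicator (A k) (fun _ => ENNReal.ofReal (b k)) z ∂μ :=
        lintegral_tsum fun k =>
          ((measurable_const.indicator (measurable_Aset ζ _)).aemeasurable)
    _ = ∑' k, ENNReal.ofReal (b k) * μ (A k) := by
        refine tsum_congr fun k => ?_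
        rw [lintegral_indicator (measurable_Aset ζ _), setLIntegral_const]
    _ ≤ ∑' k, ENNReal.ofReal (b k) * ENNReal.ofReal (C * ((2:ℝ) ^ (k+1) * r) ^ ns) :=
        ENNReal.tsum_le_tsum fun k =>
          mul_le_mul_right (hCar ζ hζ1 ((2:ℝ) ^ (k+1) * r) (by positivity)) _
    _ = ∑' k, ENNReal.ofReal (C * (2:ℝ) ^ (2*ns + 2*t) * q ^ k) := by
        refine tsum_congr fun k => ?_
        rw [← ENNReal.ofReal_mul (hb0 k)]
        congr 1
        have hid := rpow_id2 (t := t) (ns := ns) hr k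
        calc b k * (C * ((2:ℝ) ^ (k+1) * r) ^ ns)
            = C * (b k * (((2:ℝ) ^ (k+1) * r) ^ ns)) := by ring
          _ = C * ((2:ℝ) ^ (2*ns + 2*t) * ((2:ℝ) ^ (-t)) ^ k) := by rw [hid]
          _ = C * (2:ℝ) ^ (2*ns + 2*t) * q ^ k := by rw [hq_def]; ring
    _ = ENNReal.ofReal (C * (2:ℝ) ^ (2*ns + 2*t)) * ∑' k : ℕ, (ENNReal.ofReal q) ^ k := by
        rw [← ENNReal.tsum_mul_left]
        refine tsum_congr fun k => ?_
        rw [← ENNReal.ofReal_pow hq0.le, ← ENNReal.ofReal_mul (by positivity)]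
    _ = ENNReal.ofReal (C * (2:ℝ) ^ (2*ns + 2*t)) * (1 - ENNReal.ofReal q)⁻¹ := by
        rw [ENNReal.tsum_geometric]
    _ = ENNReal.ofReal (C * (2:ℝ) ^ (2*ns + 2*t) * (1 - q)⁻¹) := by
        rw [show (1:ℝ≥0∞) - ENNReal.ofReal q = ENNReal.ofReal (1 - q) by
            rw [ENNReal.ofReal_sub _ hq0.le, ENNReal.ofReal_one],
          ← ENNReal.ofReal_inv_of_pos hq1',
          ← ENNReal.ofReal_mul (by positivity)]
end

section
/- Let s > 0, t > 0, and let μ be a finite positive Borel measure on the open unit ball B_n of ℂ^n such that M := sup_{a ∈ B_n} ∫_{B_n} (1-|a|²)^t / |1 - ⟨a,z⟩|^{ns+t} dμ(z) < ∞. Then there is a constant C (depending only on n, s, t) such that μ(B_δ(ζ)) ≤ C · M · δ^{ns} for all ζ on the unit sphere and all δ ∈ (0, 1]. -/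
open MeasureTheory
open scoped ENNReal

/-- If `μ` is a finite positive Borel measure on the unit ball of `ℂⁿ` with
`M := sup_a ∫ (1-|a|²)^t/|1-⟨a,z⟩|^{ns+t} dμ < ∞`, then there is `C = C(n,s,t)` with
`μ(B_δ(ζ)) ≤ C M δ^{ns}` for every unit vector `ζ` and every `δ ∈ (0,1]`. -/
theorem stmt1 (n : ℕ) (hn : 0 < n) (s t : ℝ) (hs : 0 < s) (ht : 0 < t) :
    ∃ C : ℝ, 0 < C ∧
      ∀ (μ : Measure (Fin n → ℂ)), IsFiniteMeasure μ →
        ∀ M : ℝ, 0 ≤ M →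
        (∀ a : Fin n → ℂ, eNorm a < 1 →
          ∫⁻ z in {z : Fin n → ℂ | eNorm z < 1},
              ENNReal.ofReal ((1 - eNorm a ^ 2) ^ t /
                ‖1 - hInner a z‖ ^ ((n : ℝ) * s + t)) ∂μ
            ≤ ENNReal.ofReal M) →
        ∀ ζ : Fin n → ℂ, eNorm ζ = 1 → ∀ δ : ℝ, 0 < δ → δ ≤ 1 →
          μ {z | eNorm z < 1 ∧ ‖1 - hInner z ζ‖ < δ} ≤
            ENNReal.ofReal (C * M * δ ^ ((n : ℝ) * s)) := by
  refine ⟨(3 : ℝ) ^ ((n : ℝ) * s + t), Real.rpow_pos_of_pos (by norm_num) _, ?_⟩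
  intro μ _ M hM hsup ζ hζ δ hδ hδ1
  have hnst : 0 < (n : ℝ) * s + t := by positivity
  set a : Fin n → ℂ := fun i => (1 - δ : ℂ) * ζ i with ha
  -- norm of a
  have hna : eNorm a = 1 - δ := by
    have : ∀ i, ‖a i‖ ^ 2 = (1 - δ) ^ 2 * ‖ζ i‖ ^ 2 := by
      intro i
      simp only [ha, norm_mul]
      rw [show ‖1 - (δ : ℂ)‖ = |1 - δ| by
        rw [show (1 - (δ : ℂ)) = ((1 - δ : ℝ) : ℂ) by push_cast; ring, Complex.norm_real, Real.norm_eq_abs]]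
      rw [abs_of_nonneg (by linarith)]; ring
    simp only [eNorm, this, ← Finset.mul_sum]
    rw [Real.sqrt_mul (by positivity), Real.sqrt_sq (by linarith)]
    have : Real.sqrt (∑ i, ‖ζ i‖ ^ 2) = 1 := hζ
    rw [this, mul_one]
  have hna1 : eNorm a < 1 := by rw [hna]; linarith
  -- hInner a z in terms of w = hInner z ζ
  have hkey : ∀ z : Fin n → ℂ, (1 : ℂ) - hInner a z =
      (starRingEnd ℂ) (1 - (1 - δ : ℂ) * hInner z ζ) := by
    intro z
    simp only [hInner, ha, map_sub, map_one, map_mul, map_sum, Complex.conj_conj,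
      Complex.conj_ofReal, Finset.mul_sum]
    congr 1
    exact Finset.sum_congr rfl fun i _ => by ring
  set E := {z : Fin n → ℂ | eNorm z < 1 ∧ ‖1 - hInner z ζ‖ < δ} with hE
  set U := {z : Fin n → ℂ | eNorm z < 1} with hU
  have hEU : E ⊆ U := fun z hz => hz.1
  -- measurability of E
  have hEm : MeasurableSet E := by
    have hc1 : Continuous (eNorm (n := n)) := by
      unfold eNorm
      exact Real.continuous_sqrt.comp (continuous_finset_sum _ fun i _ =>
        (continuous_norm.comp (continuous_apply i)).pow 2)
    have hc2 : Continuous (fun z : Fin n → ℂ => ‖1 - hInner z ζ‖) := by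
      unfold hInner
      exact continuous_norm.comp (continuous_const.sub
        (continuous_finset_sum _ fun i _ => (continuous_apply i).mul continuous_const))
    exact ((isOpen_lt hc1 continuous_const).inter
      (isOpen_lt hc2 continuous_const)).measurableSet
  -- the constant lower bound c'
  set c' : ℝ := δ ^ t / (3 * δ) ^ ((n : ℝ) * s + t) with hc'
  have hc'pos : 0 < c' := by
    apply div_pos (Real.rpow_pos_of_pos hδ _) (Real.rpow_pos_of_pos (by linarith) _)
  -- pointwise bound on E
  have hpt : ∀ z ∈ E, ENNReal.ofReal c' ≤
      ENNReal.ofReal ((1 - eNorm a ^ 2) ^ t /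
        ‖1 - hInner a z‖ ^ ((n : ℝ) * s + t)) := by
    intro z hz
    apply ENNReal.ofReal_le_ofReal
    obtain ⟨hz1, hz2⟩ := hz
    set w := hInner z ζ with hw
    have habs : ‖1 - hInner a z‖ = ‖1 - (1 - δ : ℂ) * w‖ := by
      rw [hkey z, Complex.norm_conj]
    have hwub : ‖w‖ < 1 + δ := by
      calc ‖w‖ = ‖w - 1 + 1‖ := by ring_nf
        _ ≤ ‖w - 1‖ + 1 := by
            simpa using norm_add_le (w - 1) 1
        _ < δ + 1 := by
            have : ‖w - 1‖ = ‖1 - w‖ := by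
              rw [← norm_neg]; ring_nf
            rw [this]; linarith [hz2]
        _ = 1 + δ := by ring
    have habs1δ : ‖(1 : ℂ) - δ‖ = 1 - δ := by
      rw [show (1 - (δ : ℂ)) = ((1 - δ : ℝ) : ℂ) by push_cast; ring, Complex.norm_real, Real.norm_eq_abs,
        abs_of_nonneg (by linarith)]
    -- upper bound: ≤ 3δ
    have hub : ‖1 - hInner a z‖ ≤ 3 * δ := by
      rw [habs]
      have : (1 : ℂ) - (1 - δ : ℂ) * w = (1 - w) + (δ : ℂ) * w := by ring
      rw [this]
      calc ‖(1 - w) + (δ : ℂ) * w‖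
          ≤ ‖1 - w‖ + ‖(δ : ℂ) * w‖ := norm_add_le _ _
        _ ≤ δ + δ * (1 + δ) := by
            have h1 : ‖(δ : ℂ) * w‖ = δ * ‖w‖ := by
              rw [norm_mul, Complex.norm_real, Real.norm_eq_abs, abs_of_pos hδ]
            rw [h1]
            have := mul_le_mul_of_nonneg_left hwub.le hδ.le
            linarith [hz2.le]
        _ ≤ 3 * δ := by nlinarith
    -- lower bound: ≥ δ²  (hence positive)
    have hlb : δ ^ 2 ≤ ‖1 - hInner a z‖ := by
      rw [habs]
      have h1 : ‖(1 - δ : ℂ) * w‖ ≤ (1 - δ) * (1 + δ) := by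
        rw [norm_mul, habs1δ]
        exact mul_le_mul_of_nonneg_left hwub.le (by linarith)
      calc (δ : ℝ) ^ 2 = 1 - (1 - δ) * (1 + δ) := by ring
        _ ≤ 1 - ‖(1 - δ : ℂ) * w‖ := by linarith
        _ ≤ ‖1 - (1 - δ : ℂ) * w‖ := by
            have := norm_add_le (1 - (1 - δ : ℂ) * w) ((1 - δ : ℂ) * w)
            simp only [sub_add_cancel, norm_one] at this
            linarith
    have hpos : 0 < ‖1 - hInner a z‖ := lt_of_lt_of_le (by positivity) hlb
    -- numerator bound
    have hnum : δ ^ t ≤ (1 - eNorm a ^ 2) ^ t := by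
      apply Real.rpow_le_rpow hδ.le _ ht.le
      rw [hna]; nlinarith
    have hden : ‖1 - hInner a z‖ ^ ((n : ℝ) * s + t) ≤ (3 * δ) ^ ((n : ℝ) * s + t) :=
      Real.rpow_le_rpow hpos.le hub hnst.le
    rw [hc']
    exact div_le_div₀ ((Real.rpow_nonneg hδ.le t).trans hnum) hnum
      (Real.rpow_pos_of_pos hpos _) hden
  -- integral chain
  have hchain : ENNReal.ofReal c' * μ E ≤ ENNReal.ofReal M := by
    calc ENNReal.ofReal c' * μ E
        = ∫⁻ _ in E, ENNReal.ofReal c' ∂μ := by rw [setLIntegral_const]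
      _ ≤ ∫⁻ z in E, ENNReal.ofReal ((1 - eNorm a ^ 2) ^ t /
            ‖1 - hInner a z‖ ^ ((n : ℝ) * s + t)) ∂μ :=
          setLIntegral_mono' hEm hpt
      _ ≤ ∫⁻ z in U, ENNReal.ofReal ((1 - eNorm a ^ 2) ^ t /
            ‖1 - hInner a z‖ ^ ((n : ℝ) * s + t)) ∂μ :=
          lintegral_mono' (Measure.restrict_mono hEU le_rfl) le_rfl
      _ ≤ ENNReal.ofReal M := hsup a hna1
  -- conclude
  have hfin : μ E ≤ ENNReal.ofReal (c'⁻¹ * M) := by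
    have h1 : μ E = ENNReal.ofReal c'⁻¹ * (ENNReal.ofReal c' * μ E) := by
      rw [← mul_assoc, ← ENNReal.ofReal_mul (by positivity),
        inv_mul_cancel₀ hc'pos.ne', ENNReal.ofReal_one, one_mul]
    rw [h1]
    calc ENNReal.ofReal c'⁻¹ * (ENNReal.ofReal c' * μ E)
        ≤ ENNReal.ofReal c'⁻¹ * ENNReal.ofReal M := by gcongr
      _ = ENNReal.ofReal (c'⁻¹ * M) := (ENNReal.ofReal_mul (by positivity)).symm
  refine hfin.trans (ENNReal.ofReal_le_ofReal ?_)
  have hceq : c'⁻¹ = 3 ^ ((n : ℝ) * s + t) * δ ^ ((n : ℝ) * s) := by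
    rw [hc']
    rw [Real.mul_rpow (by norm_num) hδ.le]
    rw [show (n : ℝ) * s + t = (n : ℝ) * s + t from rfl]
    rw [Real.rpow_add hδ ((n : ℝ) * s) t]
    field_simp
  rw [hceq]; exact le_of_eq (by ring)
end

section
/- Let X be a quasi-Banach space and let 0 < p, q < ∞. There exist constants depending only on p, q (and the modulus of concavity of X) such that for every finite sequence (x_k) in X, (∫_0^1 ‖Σ_k r_k(t) x_k‖_X^q dt)^{1/q} ≍ (∫_0^1 ‖Σ_k r_k(t) x_k‖_X^p dt)^{1/p}, where r_k are the Rademacher functions. -/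
open MeasureTheory Finset
open scoped ENNReal

/-- The Rademacher functions `r_k(t) = sign(sin(2^{k+1} π t))`. -/
noncomputable def rademacher (k : ℕ) (t : ℝ) : ℝ :=
  Real.sign (Real.sin (2 ^ (k + 1) * Real.pi * t))

attribute [local instance] Classical.propDecidable

noncomputable section KahaneDiscrete

/-- sign attached to a boolean -/
def sg (b : Bool) : ℝ := if b then -1 else 1

lemma abs_sg (b : Bool) : |sg b| = 1 := by cases b <;> simp [sg]

lemma sg_not (b : Bool) : sg (!b) = - sg b := by cases b <;> simp [sg]

variable {X : Type} [AddCommGroup X] [Module ℝ X]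

/-- the signed sum -/
def Svec {m : ℕ} (x : Fin m → X) (ε : Fin m → Bool) : X := ∑ k : Fin m, sg (ε k) • x k

/-- partial signed sum over coordinates `< j` -/
def Sp {m : ℕ} (x : Fin m → X) (j : ℕ) (ε : Fin m → Bool) : X :=
  ∑ k : Fin m, if (k : ℕ) < j then sg (ε k) • x k else 0

/-- partial signed sum over coordinates `≥ j` -/
def Rp {m : ℕ} (x : Fin m → X) (j : ℕ) (ε : Fin m → Bool) : X :=
  ∑ k : Fin m, if j ≤ (k : ℕ) then sg (ε k) • x k else 0

lemma Sp_add_Rp {m : ℕ} (x : Fin m → X) (j : ℕ) (ε : Fin m → Bool) :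
    Sp x j ε + Rp x j ε = Svec x ε := by
  rw [Sp, Rp, Svec, ← Finset.sum_add_distrib]
  refine Finset.sum_congr rfl fun k _ => ?_
  rcases lt_or_ge (k : ℕ) j with h | h
  · rw [if_pos h, if_neg (by omega), add_zero]
  · rw [if_neg (by omega), if_pos h, zero_add]

lemma Sp_zero {m : ℕ} (x : Fin m → X) (ε : Fin m → Bool) : Sp x 0 ε = 0 := by
  simp [Sp]

lemma Sp_of_le {m : ℕ} (x : Fin m → X) {j : ℕ} (hj : m ≤ j) (ε : Fin m → Bool) :
    Sp x j ε = Svec x ε := by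
  rw [Sp, Svec]
  exact Finset.sum_congr rfl fun k _ => if_pos (lt_of_lt_of_le k.isLt hj)

lemma Sp_succ {m : ℕ} (x : Fin m → X) {j : ℕ} (hj : j < m) (ε : Fin m → Bool) :
    Sp x (j + 1) ε = Sp x j ε + sg (ε ⟨j, hj⟩) • x ⟨j, hj⟩ := by
  have : ∀ k : Fin m, (if (k : ℕ) < j + 1 then sg (ε k) • x k else 0)
      = (if (k : ℕ) < j then sg (ε k) • x k else 0)
        + (if k = ⟨j, hj⟩ then sg (ε k) • x k else 0) := by
    intro k
    rcases eq_or_ne k ⟨j, hj⟩ with rfl | hne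
    · simp
    · have hkj : (k : ℕ) ≠ j := fun h => hne (Fin.ext h)
      rw [if_neg hne, add_zero]
      rcases lt_or_ge (k : ℕ) j with h | h
      · rw [if_pos (by omega), if_pos h]
      · rw [if_neg (by omega), if_neg (by omega)]
  have h2 : (∑ k : Fin m, if (k : ℕ) < j + 1 then sg (ε k) • x k else 0)
      = (∑ k : Fin m, if (k : ℕ) < j then sg (ε k) • x k else 0)
        + (∑ k : Fin m, if k = ⟨j, hj⟩ then sg (ε k) • x k else 0) := by
    rw [← Finset.sum_add_distrib]
    exact Finset.sum_congr rfl fun k _ => this k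
  rw [Sp, Sp, h2, Finset.sum_ite_eq' Finset.univ (⟨j, hj⟩ : Fin m)]
  simp

lemma Sp_congr {m : ℕ} (x : Fin m → X) {j i : ℕ} (hij : i ≤ j) {ε ε' : Fin m → Bool}
    (h : ∀ k : Fin m, (k : ℕ) < j → ε k = ε' k) : Sp x i ε = Sp x i ε' := by
  refine Finset.sum_congr rfl fun k _ => ?_
  rcases lt_or_ge (k : ℕ) i with hk | hk
  · rw [h k (lt_of_lt_of_le hk hij)]
  · rw [if_neg (by omega), if_neg (by omega)]

lemma Rp_congr {m : ℕ} (x : Fin m → X) {j : ℕ} {ε ε' : Fin m → Bool}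
    (h : ∀ k : Fin m, j ≤ (k : ℕ) → ε k = ε' k) : Rp x j ε = Rp x j ε' := by
  refine Finset.sum_congr rfl fun k _ => ?_
  rcases le_or_gt j (k : ℕ) with hk | hk
  · rw [h k hk]
  · rw [if_neg (by omega), if_neg (by omega)]

section Quasi

variable (K : ℝ) (Q : X → ℝ)
variable (hK : 1 ≤ K)
variable (hQ0 : ∀ y, 0 ≤ Q y) (hQh : ∀ (c : ℝ) y, Q (c • y) = |c| * Q y)
variable (hQt : ∀ y z, Q (y + z) ≤ K * (Q y + Q z))

include hQh in
lemma Q_zero : Q 0 = 0 := by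
  have := hQh 0 0
  simpa using this

include hQh in
lemma Q_neg (y : X) : Q (-y) = Q y := by
  have := hQh (-1) y
  simpa using this

include hQh hQt in
lemma Q_half_add (y z : X) : Q ((2⁻¹ : ℝ) • (y + z)) ≤ 2⁻¹ * (K * (Q y + Q z)) := by
  rw [hQh]
  have : |(2⁻¹ : ℝ)| = 2⁻¹ := by norm_num
  rw [this]
  have := hQt y z
  nlinarith [this]

end Quasi

section Counting

variable {m : ℕ}

lemma card_filter_involutive (φ : (Fin m → Bool) → (Fin m → Bool))
    (hφ : Function.Involutive φ) (P : (Fin m → Bool) → Prop) :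
    (Finset.univ.filter (fun ε => P (φ ε))).card = (Finset.univ.filter P).card := by
  refine Finset.card_bij' (fun ε _ => φ ε) (fun ε _ => φ ε) ?_ ?_ ?_ ?_
  · intro ε hε
    simp only [Finset.mem_filter, Finset.mem_univ, true_and] at hε ⊢
    exact hε
  · intro ε hε
    simp only [Finset.mem_filter, Finset.mem_univ, true_and] at hε ⊢
    rw [hφ ε]
    exact hε
  · intro ε _; exact hφ ε
  · intro ε _; exact hφ ε

/-- independence of an event depending on coordinates `< j` and one depending on
coordinates `≥ j` -/
lemma card_filter_and_mul (j : ℕ) (A B : (Fin m → Bool) → Prop)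
    (hA : ∀ ε ε', (∀ k : Fin m, (k : ℕ) < j → ε k = ε' k) → A ε → A ε')
    (hB : ∀ ε ε', (∀ k : Fin m, j ≤ (k : ℕ) → ε k = ε' k) → B ε → B ε') :
    (Finset.univ.filter (fun ε => A ε ∧ B ε)).card * 2 ^ m
      = (Finset.univ.filter A).card * (Finset.univ.filter B).card := by
  classical
  have hcard : (Finset.univ : Finset (Fin m → Bool)).card = 2 ^ m := by
    simp [Finset.card_univ]
  have key : ((Finset.univ.filter A) ×ˢ (Finset.univ.filter B)).card
      = ((Finset.univ.filter (fun ε => A ε ∧ B ε)) ×ˢ (Finset.univ : Finset (Fin m → Bool))).card := by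
    refine Finset.card_bij'
      (fun uv _ => ((fun k => if (k : ℕ) < j then uv.1 k else uv.2 k),
                    (fun k => if (k : ℕ) < j then uv.2 k else uv.1 k)))
      (fun uv _ => ((fun k => if (k : ℕ) < j then uv.1 k else uv.2 k),
                    (fun k => if (k : ℕ) < j then uv.2 k else uv.1 k))) ?_ ?_ ?_ ?_
    · rintro ⟨u, v⟩ huv
      simp only [Finset.mem_product, Finset.mem_filter, Finset.mem_univ, true_and] at huv ⊢
      refine ⟨⟨?_, ?_⟩, trivial⟩
      · exact hA u _ (fun k hk => by simp [hk]) huv.1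
      · exact hB v _ (fun k hk => by simp [Nat.not_lt.mpr hk]) huv.2
    · rintro ⟨w, z⟩ hwz
      simp only [Finset.mem_product, Finset.mem_filter, Finset.mem_univ, true_and] at hwz ⊢
      obtain ⟨⟨hAw, hBw⟩, -⟩ := hwz
      constructor
      · exact hA w _ (fun k hk => by simp [hk]) hAw
      · exact hB w _ (fun k hk => by simp [Nat.not_lt.mpr hk]) hBw
    · rintro ⟨u, v⟩ _
      simp only [Prod.mk.injEq]
      constructor <;> · funext k; by_cases hk : (k : ℕ) < j <;> simp [hk]
    · rintro ⟨w, z⟩ _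
      simp only [Prod.mk.injEq]
      constructor <;> · funext k; by_cases hk : (k : ℕ) < j <;> simp [hk]
  rw [Finset.card_product, Finset.card_product, hcard] at key
  omega

end Counting

section Levy

variable {X : Type} [AddCommGroup X] [Module ℝ X]
variable {m : ℕ}

/-- first crossing of the partial sums at time `j` -/
def Apred (Q : X → ℝ) (x : Fin m → X) (t : ℝ) (j : ℕ) (ε : Fin m → Bool) : Prop :=
  j ≤ m ∧ t < Q (Sp x j ε) ∧ ∀ i, i < j → Q (Sp x i ε) ≤ t

lemma decomp (Q : X → ℝ) (x : Fin m → X) (t : ℝ) (P : (Fin m → Bool) → Prop) :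
    (Finset.univ.filter fun ε => (∃ j, j ≤ m ∧ t < Q (Sp x j ε)) ∧ P ε)
      = (Finset.range (m + 1)).biUnion
          (fun j => Finset.univ.filter fun ε => Apred Q x t j ε ∧ P ε) := by
  ext ε
  simp only [Finset.mem_filter, Finset.mem_univ, true_and, Finset.mem_biUnion,
    Finset.mem_range]
  constructor
  · rintro ⟨hE, hP⟩
    have h1 := Nat.find_spec hE
    refine ⟨Nat.find hE, Nat.lt_succ_of_le h1.1, ⟨h1.1, h1.2, ?_⟩, hP⟩
    intro i hi
    have h2 := Nat.find_min hE hi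
    push_neg at h2
    exact h2 (lt_of_lt_of_le hi h1.1).le
  · rintro ⟨j, -, ⟨hj, hQj, -⟩, hP⟩
    exact ⟨⟨j, hj, hQj⟩, hP⟩

lemma decomp_disjoint (Q : X → ℝ) (x : Fin m → X) (t : ℝ) (P : (Fin m → Bool) → Prop) :
    ∀ j ∈ Finset.range (m + 1), ∀ j' ∈ Finset.range (m + 1), j ≠ j' →
      Disjoint (Finset.univ.filter fun ε => Apred Q x t j ε ∧ P ε)
        (Finset.univ.filter fun ε => Apred Q x t j' ε ∧ P ε) := by
  intro j _ j' _ hne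
  rw [Finset.disjoint_left]
  intro ε hj hj'
  simp only [Finset.mem_filter, Finset.mem_univ, true_and] at hj hj'
  obtain ⟨⟨-, hQj, hmin⟩, -⟩ := hj
  obtain ⟨⟨-, hQj', hmin'⟩, -⟩ := hj'
  rcases lt_or_gt_of_ne hne with h | h
  · exact absurd hQj (not_lt.mpr (hmin' j h))
  · exact absurd hQj' (not_lt.mpr (hmin j' h))

lemma decomp_disjoint0 (Q : X → ℝ) (x : Fin m → X) (t : ℝ) :
    ∀ j ∈ Finset.range (m + 1), ∀ j' ∈ Finset.range (m + 1), j ≠ j' →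
      Disjoint (Finset.univ.filter fun ε => Apred Q x t j ε)
        (Finset.univ.filter fun ε => Apred Q x t j' ε) := by
  intro j _ j' _ hne
  rw [Finset.disjoint_left]
  intro ε hj hj'
  simp only [Finset.mem_filter, Finset.mem_univ, true_and] at hj hj'
  obtain ⟨-, hQj, hmin⟩ := hj
  obtain ⟨-, hQj', hmin'⟩ := hj'
  rcases lt_or_gt_of_ne hne with h | h
  · exact absurd hQj (not_lt.mpr (hmin' j h))
  · exact absurd hQj' (not_lt.mpr (hmin j' h))

/-- flip all coordinates `≥ j` -/
def flipTail (j : ℕ) (ε : Fin m → Bool) : Fin m → Bool :=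
  fun k => if j ≤ (k : ℕ) then !(ε k) else ε k

lemma flipTail_involutive (j : ℕ) : Function.Involutive (flipTail (m := m) j) := by
  intro ε; funext k; by_cases h : j ≤ (k : ℕ) <;> simp [flipTail, h]

lemma Sp_flipTail (x : Fin m → X) {i j : ℕ} (hij : i ≤ j) (ε : Fin m → Bool) :
    Sp x i (flipTail j ε) = Sp x i ε :=
  Sp_congr x hij (fun k hk => by simp [flipTail, Nat.not_le.mpr hk])

lemma Sp_eq_half_add_flipTail (x : Fin m → X) (j : ℕ) (ε : Fin m → Bool) :
    Sp x j ε = (2⁻¹ : ℝ) • (Svec x ε + Svec x (flipTail j ε)) := by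
  rw [Svec, Svec, ← Finset.sum_add_distrib, Finset.smul_sum, Sp]
  refine Finset.sum_congr rfl fun k _ => ?_
  rcases lt_or_ge (k : ℕ) j with h | h
  · rw [if_pos h]
    have : flipTail j ε k = ε k := by simp [flipTail, Nat.not_le.mpr h]
    rw [this, ← add_smul, smul_smul]
    congr 1
    ring
  · rw [if_neg (by omega)]
    have : flipTail j ε k = !(ε k) := by simp [flipTail, h]
    rw [this, sg_not, neg_smul, add_neg_cancel, smul_zero]

lemma Apred_flipTail (Q : X → ℝ) (x : Fin m → X) (t : ℝ) (j : ℕ) (ε : Fin m → Bool)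
    (h : Apred Q x t j ε) : Apred Q x t j (flipTail j ε) := by
  obtain ⟨hjm, hQj, hmin⟩ := h
  exact ⟨hjm, by rwa [Sp_flipTail x le_rfl], fun i hi => by
    rw [Sp_flipTail x (le_of_lt hi)]; exact hmin i hi⟩

variable (K : ℝ) (Q : X → ℝ) (x : Fin m → X)

lemma levy (hK : 1 ≤ K)
    (hQ0 : ∀ y, 0 ≤ Q y) (hQh : ∀ (c : ℝ) y, Q (c • y) = |c| * Q y)
    (hQt : ∀ y z, Q (y + z) ≤ K * (Q y + Q z)) (t : ℝ) :
    (Finset.univ.filter fun ε => ∃ j, j ≤ m ∧ t < Q (Sp x j ε)).card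
      ≤ 2 * (Finset.univ.filter fun ε => t / K < Q (Svec x ε)).card := by
  have hK0 : (0 : ℝ) < K := lt_of_lt_of_le one_pos hK
  have hdec := decomp Q x t (fun _ => True)
  simp only [and_true] at hdec
  rw [hdec, Finset.card_biUnion (decomp_disjoint0 Q x t)]
  -- per fiber estimate
  have per : ∀ j, (Finset.univ.filter fun ε => Apred Q x t j ε).card
      ≤ 2 * (Finset.univ.filter fun ε => Apred Q x t j ε ∧ t / K < Q (Svec x ε)).card := by
    intro j
    set F := Finset.univ.filter fun ε => Apred Q x t j ε ∧ t / K < Q (Svec x ε) with hF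
    have hsub : (Finset.univ.filter fun ε => Apred Q x t j ε)
        ⊆ F ∪ F.image (flipTail j) := by
      intro ε hε
      simp only [Finset.mem_filter, Finset.mem_univ, true_and] at hε
      by_cases hc : t / K < Q (Svec x ε)
      · exact Finset.mem_union_left _ (by simp [hF, Finset.mem_filter, hε, hc])
      · push_neg at hc
        have hrefl := Sp_eq_half_add_flipTail x j ε
        have hhalf := Q_half_add K Q hQh hQt (Svec x ε) (Svec x (flipTail j ε))
        rw [← hrefl] at hhalf
        have hφc : t / K < Q (Svec x (flipTail j ε)) := by
          by_contra hc2
          push_neg at hc2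
          have h1 := hε.2.1
          have h0 : Q (Svec x ε) + Q (Svec x (flipTail j ε)) ≤ 2 * (t / K) := by linarith
          have : Q (Sp x j ε) ≤ t := by
            calc Q (Sp x j ε) ≤ 2⁻¹ * (K * (Q (Svec x ε) + Q (Svec x (flipTail j ε)))) := hhalf
            _ ≤ 2⁻¹ * (K * (2 * (t / K))) := by nlinarith
            _ = t := by field_simp
          linarith
        refine Finset.mem_union_right _ ?_
        rw [Finset.mem_image]
        exact ⟨flipTail j ε, by simp [hF, Finset.mem_filter, Apred_flipTail Q x t j ε hε, hφc],
          flipTail_involutive j ε⟩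
    calc (Finset.univ.filter fun ε => Apred Q x t j ε).card
        ≤ (F ∪ F.image (flipTail j)).card := Finset.card_le_card hsub
      _ ≤ F.card + (F.image (flipTail j)).card := Finset.card_union_le _ _
      _ ≤ F.card + F.card := by
          have := Finset.card_image_le (s := F) (f := flipTail j)
          omega
      _ = 2 * F.card := by ring
  calc ∑ j ∈ Finset.range (m + 1),
        (Finset.univ.filter fun ε => Apred Q x t j ε).card
      ≤ ∑ j ∈ Finset.range (m + 1),
        2 * (Finset.univ.filter fun ε => Apred Q x t j ε ∧ t / K < Q (Svec x ε)).card :=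
        Finset.sum_le_sum fun j _ => per j
    _ = 2 * ∑ j ∈ Finset.range (m + 1),
        (Finset.univ.filter fun ε => Apred Q x t j ε ∧ t / K < Q (Svec x ε)).card := by
        rw [Finset.mul_sum]
    _ = 2 * (Finset.univ.filter fun ε =>
        (∃ j, j ≤ m ∧ t < Q (Sp x j ε)) ∧ t / K < Q (Svec x ε)).card := by
        rw [decomp Q x t (fun ε => t / K < Q (Svec x ε)), Finset.card_biUnion (decomp_disjoint Q x t _)]
    _ ≤ 2 * (Finset.univ.filter fun ε => t / K < Q (Svec x ε)).card := by
        have : (Finset.univ.filter fun ε =>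
            (∃ j, j ≤ m ∧ t < Q (Sp x j ε)) ∧ t / K < Q (Svec x ε))
            ⊆ Finset.univ.filter fun ε => t / K < Q (Svec x ε) := by
          intro ε hε
          simp only [Finset.mem_filter, Finset.mem_univ, true_and] at hε ⊢
          exact hε.2
        exact Nat.mul_le_mul_left 2 (Finset.card_le_card this)

/-- flip the single coordinate `k0` -/
def flipOne (k0 : Fin m) (ε : Fin m → Bool) : Fin m → Bool :=
  fun k => if k = k0 then !(ε k) else ε k

lemma flipOne_involutive (k0 : Fin m) : Function.Involutive (flipOne (m := m) k0) := by
  intro ε; funext k; by_cases h : k = k0 <;> simp [flipOne, h]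

/-- if strictly less than half the points have `Q (Svec x ε) > t₀`, then each `x k` is
small -/
lemma increment_bound (hK : 1 ≤ K)
    (hQ0 : ∀ y, 0 ≤ Q y) (hQh : ∀ (c : ℝ) y, Q (c • y) = |c| * Q y)
    (hQt : ∀ y z, Q (y + z) ≤ K * (Q y + Q z)) (t₀ : ℝ)
    (hsmall : 2 * (Finset.univ.filter fun ε => t₀ < Q (Svec x ε)).card < 2 ^ m)
    (k0 : Fin m) : Q (x k0) ≤ K * t₀ := by
  have hK0 : (0 : ℝ) < K := lt_of_lt_of_le one_pos hK
  -- find a point where both the sum and its k0-flip are small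
  have hcard : ((Finset.univ.filter fun ε => t₀ < Q (Svec x (flipOne k0 ε)))).card
      = ((Finset.univ.filter fun ε => t₀ < Q (Svec x ε))).card :=
    card_filter_involutive (flipOne k0) (flipOne_involutive k0) (fun ε => t₀ < Q (Svec x ε))
  have hex : ∃ ε : Fin m → Bool, Q (Svec x ε) ≤ t₀ ∧ Q (Svec x (flipOne k0 ε)) ≤ t₀ := by
    by_contra hcon
    push_neg at hcon
    have hsub : (Finset.univ : Finset (Fin m → Bool))
        ⊆ (Finset.univ.filter fun ε => t₀ < Q (Svec x ε))
          ∪ (Finset.univ.filter fun ε => t₀ < Q (Svec x (flipOne k0 ε))) := by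
      intro ε _
      rcases lt_or_ge t₀ (Q (Svec x ε)) with h | h
      · exact Finset.mem_union_left _ (by simp [h])
      · exact Finset.mem_union_right _ (by simp [hcon ε h])
    have h1 : (Finset.univ : Finset (Fin m → Bool)).card = 2 ^ m := by
      simp [Finset.card_univ]
    have h2 := Finset.card_le_card hsub
    have h3 := Finset.card_union_le
      (Finset.univ.filter fun ε => t₀ < Q (Svec x ε))
      (Finset.univ.filter fun ε => t₀ < Q (Svec x (flipOne k0 ε)))
    omega
  obtain ⟨ε, h1, h2⟩ := hex
  -- the difference of the two sums is 2 sg(ε k0) • x k0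
  have hdiff : Svec x ε - Svec x (flipOne k0 ε) = (2 * sg (ε k0)) • x k0 := by
    rw [Svec, Svec, ← Finset.sum_sub_distrib]
    have hterm : ∀ k : Fin m, sg (ε k) • x k - sg (flipOne k0 ε k) • x k
        = if k = k0 then (2 * sg (ε k)) • x k else 0 := by
      intro k
      by_cases h : k = k0
      · rw [if_pos h]
        have : flipOne k0 ε k = !(ε k) := by simp [flipOne, h]
        rw [this, sg_not, neg_smul, sub_neg_eq_add, ← add_smul, ← two_mul]
      · rw [if_neg h]
        have : flipOne k0 ε k = ε k := by simp [flipOne, h]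
        rw [this, sub_self]
    rw [Finset.sum_congr rfl fun k _ => hterm k]
    have := Finset.sum_ite_eq' Finset.univ k0 (fun k => (2 * sg (ε k)) • x k)
    simpa using this
  have hxk : x k0 = (2 * sg (ε k0))⁻¹ • (Svec x ε - Svec x (flipOne k0 ε)) := by
    rw [hdiff, smul_smul, inv_mul_cancel₀, one_smul]
    cases hb : ε k0 <;> simp [sg] <;> norm_num
  have habs : |(2 * sg (ε k0))⁻¹| = 2⁻¹ := by
    cases hb : ε k0 <;> simp [sg] <;> norm_num
  have hQx : Q (x k0) = 2⁻¹ * Q (Svec x ε - Svec x (flipOne k0 ε)) := by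
    rw [hxk, hQh, habs]
  have hQsub : Q (Svec x ε - Svec x (flipOne k0 ε))
      ≤ K * (Q (Svec x ε) + Q (Svec x (flipOne k0 ε))) := by
    have := hQt (Svec x ε) (-(Svec x (flipOne k0 ε)))
    rw [Q_neg Q hQh] at this
    simpa [sub_eq_add_neg] using this
  have ht0 : 0 ≤ t₀ := le_trans (hQ0 _) h1
  rw [hQx]
  nlinarith [hQ0 (Svec x ε), hQ0 (Svec x (flipOne k0 ε))]

/-- flip all coordinates `< j` -/
def flipInit (j : ℕ) (ε : Fin m → Bool) : Fin m → Bool :=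
  fun k => if (k : ℕ) < j then !(ε k) else ε k

lemma flipInit_involutive (j : ℕ) : Function.Involutive (flipInit (m := m) j) := by
  intro ε; funext k; by_cases h : (k : ℕ) < j <;> simp [flipInit, h]

lemma Rp_flipInit (x : Fin m → X) (j : ℕ) (ε : Fin m → Bool) :
    Rp x j (flipInit j ε) = Rp x j ε :=
  Rp_congr x (fun k hk => by simp [flipInit, Nat.not_lt.mpr hk])

lemma Rp_eq_half_add_flipInit (x : Fin m → X) (j : ℕ) (ε : Fin m → Bool) :
    Rp x j ε = (2⁻¹ : ℝ) • (Svec x ε + Svec x (flipInit j ε)) := by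
  rw [Svec, Svec, ← Finset.sum_add_distrib, Finset.smul_sum, Rp]
  refine Finset.sum_congr rfl fun k _ => ?_
  rcases le_or_gt j (k : ℕ) with h | h
  · rw [if_pos h]
    have : flipInit j ε k = ε k := by simp [flipInit, Nat.not_lt.mpr h]
    rw [this, ← add_smul, smul_smul]
    congr 1
    ring
  · rw [if_neg (by omega)]
    have : flipInit j ε k = !(ε k) := by simp [flipInit, h]
    rw [this, sg_not, neg_smul, add_neg_cancel, smul_zero]

/-- reflection bound for the tail sums -/
lemma card_tail_reflect (hK : 1 ≤ K)
    (hQh : ∀ (c : ℝ) y, Q (c • y) = |c| * Q y)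
    (hQt : ∀ y z, Q (y + z) ≤ K * (Q y + Q z)) (j : ℕ) (u : ℝ) :
    (Finset.univ.filter fun ε => K * u < Q (Rp x j ε)).card
      ≤ 2 * (Finset.univ.filter fun ε => u < Q (Svec x ε)).card := by
  have hK0 : (0 : ℝ) < K := lt_of_lt_of_le one_pos hK
  set F := Finset.univ.filter fun ε => u < Q (Svec x ε) with hF
  have hsub : (Finset.univ.filter fun ε => K * u < Q (Rp x j ε))
      ⊆ F ∪ F.image (flipInit j) := by
    intro ε hε
    simp only [Finset.mem_filter, Finset.mem_univ, true_and] at hε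
    by_cases hc : u < Q (Svec x ε)
    · exact Finset.mem_union_left _ (by simp [hF, hc])
    · push_neg at hc
      have hrefl := Rp_eq_half_add_flipInit x j ε
      have hhalf := Q_half_add K Q hQh hQt (Svec x ε) (Svec x (flipInit j ε))
      rw [← hrefl] at hhalf
      have hφc : u < Q (Svec x (flipInit j ε)) := by
        by_contra hc2
        push_neg at hc2
        nlinarith
      refine Finset.mem_union_right _ ?_
      rw [Finset.mem_image]
      exact ⟨flipInit j ε, by simp [hF, hφc], flipInit_involutive j ε⟩
  calc (Finset.univ.filter fun ε => K * u < Q (Rp x j ε)).card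
      ≤ (F ∪ F.image (flipInit j)).card := Finset.card_le_card hsub
    _ ≤ F.card + (F.image (flipInit j)).card := Finset.card_union_le _ _
    _ ≤ F.card + F.card := by
        have := Finset.card_image_le (s := F) (f := flipInit j)
        omega
    _ = 2 * F.card := by ring

/-- the tail-squaring inequality -/
lemma squeeze (hK : 1 ≤ K)
    (hQ0 : ∀ y, 0 ≤ Q y) (hQh : ∀ (c : ℝ) y, Q (c • y) = |c| * Q y)
    (hQt : ∀ y z, Q (y + z) ≤ K * (Q y + Q z)) (t₀ u : ℝ) (ht₀ : 0 < t₀) (hu : t₀ ≤ u)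
    (hsmall : 2 * (Finset.univ.filter fun ε => t₀ < Q (Svec x ε)).card < 2 ^ m) :
    (Finset.univ.filter fun ε => (2 * K ^ 3 + K ^ 2) * u < Q (Svec x ε)).card * 2 ^ m
      ≤ 4 * (Finset.univ.filter fun ε => u < Q (Svec x ε)).card ^ 2 := by
  have hK0 : (0 : ℝ) < K := lt_of_lt_of_le one_pos hK
  have hu0 : (0 : ℝ) < u := lt_of_lt_of_le ht₀ hu
  -- the cover
  have hcover : (Finset.univ.filter fun ε => (2 * K ^ 3 + K ^ 2) * u < Q (Svec x ε))
      ⊆ (Finset.range (m + 1)).biUnion (fun j => Finset.univ.filter fun ε =>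
          Apred Q x (K * u) j ε ∧ K * u < Q (Rp x j ε)) := by
    intro ε hε
    simp only [Finset.mem_filter, Finset.mem_univ, true_and] at hε
    have hKD : K ≤ 2 * K ^ 3 + K ^ 2 := by nlinarith
    have hE : ∃ j, j ≤ m ∧ K * u < Q (Sp x j ε) := by
      refine ⟨m, le_rfl, ?_⟩
      rw [Sp_of_le x le_rfl]
      have : K * u ≤ (2 * K ^ 3 + K ^ 2) * u := by nlinarith
      linarith
    have hspec := Nat.find_spec hE
    have hminA : ∀ i, i < Nat.find hE → Q (Sp x i ε) ≤ K * u := by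
      intro i hi
      have h2 := Nat.find_min hE hi
      push_neg at h2
      exact h2 (lt_of_lt_of_le hi hspec.1).le
    obtain ⟨j', hj'⟩ : ∃ j', Nat.find hE = j' + 1 := by
      rcases Nat.eq_zero_or_pos (Nat.find hE) with h0 | hpos
      · exfalso
        have h1 := hspec.2
        rw [h0, Sp_zero, Q_zero Q hQh] at h1
        nlinarith
      · exact ⟨Nat.find hE - 1, by omega⟩
    rw [hj'] at hspec hminA
    have hj'm : j' < m := by omega
    have hSp : Q (Sp x (j' + 1) ε) ≤ 2 * K ^ 2 * u := by
      rw [Sp_succ x hj'm]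
      have h1 := hQt (Sp x j' ε) (sg (ε ⟨j', hj'm⟩) • x ⟨j', hj'm⟩)
      have h2 : Q (sg (ε ⟨j', hj'm⟩) • x ⟨j', hj'm⟩) = Q (x ⟨j', hj'm⟩) := by
        rw [hQh, abs_sg, one_mul]
      have h3 : Q (x ⟨j', hj'm⟩) ≤ K * t₀ :=
        increment_bound K Q x hK hQ0 hQh hQt t₀ hsmall _
      have h4 : Q (Sp x j' ε) ≤ K * u := hminA j' (by omega)
      nlinarith
    have hRp : K * u < Q (Rp x (j' + 1) ε) := by
      have h1 : Q (Svec x ε) ≤ K * (Q (Sp x (j' + 1) ε) + Q (Rp x (j' + 1) ε)) := by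
        have := hQt (Sp x (j' + 1) ε) (Rp x (j' + 1) ε)
        rwa [Sp_add_Rp] at this
      nlinarith [hQ0 (Rp x (j' + 1) ε)]
    simp only [Finset.mem_biUnion, Finset.mem_range, Finset.mem_filter, Finset.mem_univ,
      true_and]
    exact ⟨j' + 1, by omega, ⟨hspec.1, hspec.2, hminA⟩, hRp⟩
  -- counting
  have hprod : ∀ j, (Finset.univ.filter fun ε =>
        Apred Q x (K * u) j ε ∧ K * u < Q (Rp x j ε)).card * 2 ^ m
      = (Finset.univ.filter fun ε => Apred Q x (K * u) j ε).card
        * (Finset.univ.filter fun ε => K * u < Q (Rp x j ε)).card := by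
    intro j
    refine card_filter_and_mul j _ _ ?_ ?_
    · intro ε ε' hag hA
      obtain ⟨hjm, hQj, hmin⟩ := hA
      refine ⟨hjm, ?_, ?_⟩
      · rwa [← Sp_congr x le_rfl hag]
      · intro i hi
        rw [← Sp_congr x hi.le hag]
        exact hmin i hi
    · intro ε ε' hag hB
      rwa [← Rp_congr x hag]
  have htail : ∀ j, (Finset.univ.filter fun ε => K * u < Q (Rp x j ε)).card
      ≤ 2 * (Finset.univ.filter fun ε => u < Q (Svec x ε)).card := fun j =>
    card_tail_reflect K Q x hK hQh hQt j u
  have hlev : (Finset.univ.filter fun ε => ∃ j, j ≤ m ∧ K * u < Q (Sp x j ε)).card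
      ≤ 2 * (Finset.univ.filter fun ε => u < Q (Svec x ε)).card := by
    have h := levy K Q x hK hQ0 hQh hQt (K * u)
    have : K * u / K = u := by field_simp
    rwa [this] at h
  have hdec := decomp Q x (K * u) (fun _ => True)
  simp only [and_true] at hdec
  have hsum : ∑ j ∈ Finset.range (m + 1),
      (Finset.univ.filter fun ε => Apred Q x (K * u) j ε).card
      ≤ 2 * (Finset.univ.filter fun ε => u < Q (Svec x ε)).card := by
    rw [← Finset.card_biUnion (decomp_disjoint0 Q x (K * u)), ← hdec]
    exact hlev
  set c := (Finset.univ.filter fun ε => u < Q (Svec x ε)).card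
  calc (Finset.univ.filter fun ε => (2 * K ^ 3 + K ^ 2) * u < Q (Svec x ε)).card * 2 ^ m
      ≤ ((Finset.range (m + 1)).biUnion (fun j => Finset.univ.filter fun ε =>
          Apred Q x (K * u) j ε ∧ K * u < Q (Rp x j ε))).card * 2 ^ m := by
        exact Nat.mul_le_mul_right _ (Finset.card_le_card hcover)
    _ ≤ (∑ j ∈ Finset.range (m + 1), (Finset.univ.filter fun ε =>
          Apred Q x (K * u) j ε ∧ K * u < Q (Rp x j ε)).card) * 2 ^ m := by
        exact Nat.mul_le_mul_right _ (Finset.card_biUnion_le)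
    _ = ∑ j ∈ Finset.range (m + 1), (Finset.univ.filter fun ε =>
          Apred Q x (K * u) j ε ∧ K * u < Q (Rp x j ε)).card * 2 ^ m := by
        rw [Finset.sum_mul]
    _ = ∑ j ∈ Finset.range (m + 1), (Finset.univ.filter fun ε =>
          Apred Q x (K * u) j ε).card
            * (Finset.univ.filter fun ε => K * u < Q (Rp x j ε)).card := by
        exact Finset.sum_congr rfl fun j _ => hprod j
    _ ≤ ∑ j ∈ Finset.range (m + 1), (Finset.univ.filter fun ε =>
          Apred Q x (K * u) j ε).card * (2 * c) :=
        Finset.sum_le_sum fun j _ => Nat.mul_le_mul_left _ (htail j)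
    _ = (∑ j ∈ Finset.range (m + 1), (Finset.univ.filter fun ε =>
          Apred Q x (K * u) j ε).card) * (2 * c) := by
        rw [Finset.sum_mul]
    _ ≤ (2 * c) * (2 * c) := Nat.mul_le_mul_right _ hsum
    _ = 4 * c ^ 2 := by ring

end Levy

section Analytic

lemma pow_rpow_comm {D : ℝ} (hD : 0 ≤ D) (q : ℝ) (j : ℕ) :
    (D ^ j) ^ q = (D ^ q) ^ j := by
  rw [← Real.rpow_natCast D j, ← Real.rpow_mul hD, mul_comm, Real.rpow_mul hD,
    Real.rpow_natCast]

lemma kahane_summable {E : ℝ} (hE : 1 ≤ E) :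
    Summable (fun n : ℕ => E ^ (n + 2) * (4⁻¹ : ℝ) ^ (2 ^ n)) := by
  have hE0 : (0 : ℝ) < E := lt_of_lt_of_le one_pos hE
  apply summable_of_ratio_norm_eventually_le (r := 1 / 2) (by norm_num)
  have htend : Filter.Tendsto (fun n : ℕ => E * (4⁻¹ : ℝ) ^ (2 ^ n)) Filter.atTop (nhds 0) := by
    have hb : ∀ n : ℕ, E * (4⁻¹ : ℝ) ^ (2 ^ n) ≤ E * (4⁻¹ : ℝ) ^ n := by
      intro n
      have := pow_le_pow_of_le_one (by norm_num : (0:ℝ) ≤ 4⁻¹) (by norm_num : (4⁻¹:ℝ) ≤ 1)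
        (Nat.le_of_lt (Nat.lt_two_pow_self (n := n)))
      nlinarith [pow_nonneg (by norm_num : (0:ℝ) ≤ 4⁻¹) (2 ^ n)]
    have h0 : ∀ n : ℕ, 0 ≤ E * (4⁻¹ : ℝ) ^ (2 ^ n) := fun n =>
      mul_nonneg hE0.le (pow_nonneg (by norm_num) _)
    have hgeo : Filter.Tendsto (fun n : ℕ => E * (4⁻¹ : ℝ) ^ n) Filter.atTop (nhds 0) := by
      have := (tendsto_pow_atTop_nhds_zero_of_lt_one (by norm_num : (0:ℝ) ≤ 4⁻¹)
        (by norm_num : (4⁻¹:ℝ) < 1)).const_mul E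
      simpa using this
    exact squeeze_zero h0 hb hgeo
  have hev : ∀ᶠ n : ℕ in Filter.atTop, E * (4⁻¹ : ℝ) ^ (2 ^ n) ≤ 1 / 2 := by
    have := htend.eventually (eventually_le_nhds (by norm_num : (0:ℝ) < 1/2))
    simpa using this
  filter_upwards [hev] with n hn
  have hpos : ∀ j : ℕ, (0 : ℝ) < E ^ (j + 2) * (4⁻¹ : ℝ) ^ (2 ^ j) :=
    fun j => mul_pos (pow_pos hE0 _) (pow_pos (by norm_num) _)
  rw [Real.norm_eq_abs, Real.norm_eq_abs, abs_of_pos (hpos _), abs_of_pos (hpos _)]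
  have h2 : (2 : ℕ) ^ (n + 1) = 2 ^ n + 2 ^ n := by rw [pow_succ]; omega
  have hsplit : (4⁻¹ : ℝ) ^ (2 ^ (n + 1)) = (4⁻¹ : ℝ) ^ (2 ^ n) * (4⁻¹ : ℝ) ^ (2 ^ n) := by
    rw [h2, pow_add]
  have hEs : E ^ (n + 1 + 2) = E * E ^ (n + 2) := by ring
  rw [hsplit, hEs]
  have hq := hpos n
  calc E * E ^ (n + 2) * ((4⁻¹:ℝ) ^ 2 ^ n * (4⁻¹:ℝ) ^ 2 ^ n)
      = (E * (4⁻¹:ℝ) ^ 2 ^ n) * (E ^ (n + 2) * (4⁻¹:ℝ) ^ 2 ^ n) := by ring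
    _ ≤ (1 / 2) * (E ^ (n + 2) * (4⁻¹:ℝ) ^ 2 ^ n) := by nlinarith

set_option maxHeartbeats 1000000 in
/-- the main discrete inequality: the `q`-th average moment is controlled by the `p`-th -/
lemma discrete_kahane (p q K : ℝ) (hp : 0 < p) (hq : 0 < q) (hK : 1 ≤ K) :
    ∃ C : ℝ, 0 < C ∧
      ∀ (X : Type) (_ : AddCommGroup X) (_ : Module ℝ X) (Q : X → ℝ),
        (∀ y, 0 ≤ Q y) → (∀ (c : ℝ) y, Q (c • y) = |c| * Q y) →
        (∀ y z, Q (y + z) ≤ K * (Q y + Q z)) →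
        ∀ (m : ℕ) (x : Fin m → X),
          (2 ^ m : ℝ)⁻¹ * ∑ ε : Fin m → Bool, Q (Svec x ε) ^ q
            ≤ C * ((2 ^ m : ℝ)⁻¹ * ∑ ε : Fin m → Bool, Q (Svec x ε) ^ p) ^ (q / p) := by
  have hK0 : (0 : ℝ) < K := lt_of_lt_of_le one_pos hK
  set D : ℝ := 2 * K ^ 3 + K ^ 2 with hD
  have hD1 : 1 < D := by nlinarith
  have hD0 : (0 : ℝ) < D := lt_trans one_pos hD1
  set E : ℝ := D ^ q with hEdef
  have hE1 : 1 ≤ E := Real.one_le_rpow hD1.le hq.le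
  have hE0 : (0 : ℝ) < E := lt_of_lt_of_le one_pos hE1
  set B : ℝ := ∑' n : ℕ, E ^ (n + 2) * (4⁻¹ : ℝ) ^ (2 ^ n) with hBdef
  have hBsum := kahane_summable hE1
  have hB0 : 0 ≤ B := tsum_nonneg fun n =>
    mul_nonneg (pow_nonneg hE0.le _) (pow_nonneg (by norm_num) _)
  refine ⟨(16 : ℝ) ^ (q / p) * (E ^ 2 + B), by positivity, ?_⟩
  intro X _ _ Q hQ0 hQh hQt m x
  set a : (Fin m → Bool) → ℝ := fun ε => Q (Svec x ε) with ha
  have ha0 : ∀ ε, 0 ≤ a ε := fun ε => hQ0 _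
  set Avp : ℝ := (2 ^ m : ℝ)⁻¹ * ∑ ε : Fin m → Bool, a ε ^ p with hAvp
  by_cases hdeg : ∀ ε : Fin m → Bool, a ε = 0
  · have h1 : ∀ ε : Fin m → Bool, a ε ^ q = 0 := fun ε => by
      rw [hdeg ε, Real.zero_rpow hq.ne']
    have h2 : ∀ ε : Fin m → Bool, a ε ^ p = 0 := fun ε => by
      rw [hdeg ε, Real.zero_rpow hp.ne']
    have hLHS : ∑ ε : Fin m → Bool, a ε ^ q = 0 := Finset.sum_eq_zero fun ε _ => h1 ε
    have hRHS : Avp = 0 := by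
      rw [hAvp, Finset.sum_eq_zero fun ε _ => h2 ε, mul_zero]
    rw [hLHS, mul_zero, hRHS, Real.zero_rpow (by positivity : q / p ≠ 0), mul_zero]
  -- nondegenerate case
  push_neg at hdeg
  obtain ⟨ε₀, hε₀⟩ := hdeg
  have hsump : 0 < ∑ ε : Fin m → Bool, a ε ^ p := by
    refine Finset.sum_pos' (fun ε _ => Real.rpow_nonneg (ha0 ε) p) ⟨ε₀, Finset.mem_univ _, ?_⟩
    exact Real.rpow_pos_of_pos (lt_of_le_of_ne (ha0 ε₀) (Ne.symm hε₀)) p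
  have h2m : (0 : ℝ) < (2 ^ m : ℝ) := by positivity
  have hAvp0 : 0 < Avp := by
    rw [hAvp]; positivity
  set t₀ : ℝ := (16 * Avp) ^ (1 / p) with ht₀def
  have ht₀ : 0 < t₀ := Real.rpow_pos_of_pos (by linarith) _
  have ht₀p : t₀ ^ p = 16 * Avp := by
    rw [ht₀def, one_div, Real.rpow_inv_rpow (by linarith) hp.ne']
  -- the counting function
  set cnt : ℝ → ℕ := fun t => (Finset.univ.filter fun ε => t < a ε).card with hcnt
  -- Markov inequality
  have hMarkov : (cnt t₀ : ℝ) * t₀ ^ p ≤ ∑ ε : Fin m → Bool, a ε ^ p := by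
    have h1 : ∀ ε ∈ Finset.univ.filter fun ε => t₀ < a ε, t₀ ^ p ≤ a ε ^ p := by
      intro ε hε
      simp only [Finset.mem_filter, Finset.mem_univ, true_and] at hε
      exact Real.rpow_le_rpow ht₀.le hε.le hp.le
    calc (cnt t₀ : ℝ) * t₀ ^ p
        = ∑ _ε ∈ Finset.univ.filter (fun ε => t₀ < a ε), t₀ ^ p := by
          rw [Finset.sum_const, nsmul_eq_mul]
      _ ≤ ∑ ε ∈ Finset.univ.filter (fun ε => t₀ < a ε), a ε ^ p := Finset.sum_le_sum h1
      _ ≤ ∑ ε : Fin m → Bool, a ε ^ p := by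
          refine Finset.sum_le_sum_of_subset_of_nonneg (Finset.filter_subset _ _) ?_
          intro ε _ _
          exact Real.rpow_nonneg (ha0 ε) p
  have h16 : (16 : ℝ) * (cnt t₀ : ℝ) ≤ 2 ^ m := by
    have h2 : (cnt t₀ : ℝ) * (16 * Avp) ≤ 2 ^ m * Avp := by
      rw [← ht₀p]
      calc (cnt t₀ : ℝ) * t₀ ^ p ≤ ∑ ε : Fin m → Bool, a ε ^ p := hMarkov
        _ = 2 ^ m * Avp := by
            rw [hAvp]
            field_simp
    nlinarith
  have h16n : 16 * cnt t₀ ≤ 2 ^ m := by exact_mod_cast h16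
  have hsmall : 2 * cnt t₀ < 2 ^ m := by
    have := Nat.one_le_two_pow (n := m)
    omega
  -- iterate the squeeze lemma
  have hiter : ∀ n : ℕ, (cnt (D ^ n * t₀) : ℝ) ≤ (4⁻¹ : ℝ) ^ (2 ^ n) * 4⁻¹ * 2 ^ m := by
    intro n
    induction n with
    | zero =>
        simp only [pow_zero, one_mul]
        calc (cnt t₀ : ℝ) ≤ 2 ^ m / 16 := by linarith
          _ = (4⁻¹ : ℝ) ^ (2 ^ 0) * 4⁻¹ * 2 ^ m := by rw [pow_zero, pow_one]; ring
    | succ n ih =>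
        have hu : t₀ ≤ D ^ n * t₀ := by
          nlinarith [one_le_pow₀ hD1.le (n := n), pow_pos hD0 n]
        have hsq := squeeze K Q x hK hQ0 hQh hQt t₀ (D ^ n * t₀) ht₀ hu hsmall
        have harg : D * (D ^ n * t₀) = D ^ (n + 1) * t₀ := by ring
        have hsq' : (cnt (D ^ (n + 1) * t₀) : ℝ) * 2 ^ m ≤ 4 * (cnt (D ^ n * t₀) : ℝ) ^ 2 := by
          have h := hsq
          rw [harg] at h
          exact_mod_cast h
        have hgoal : (cnt (D ^ (n + 1) * t₀) : ℝ) * 2 ^ m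
            ≤ ((4⁻¹ : ℝ) ^ (2 ^ (n + 1)) * 4⁻¹ * 2 ^ m) * 2 ^ m := by
          have hsplit : (4⁻¹ : ℝ) ^ (2 ^ (n + 1)) = ((4⁻¹ : ℝ) ^ (2 ^ n)) ^ 2 := by
            rw [pow_succ, pow_mul]
          rw [hsplit]
          have hc0 : (0 : ℝ) ≤ (cnt (D ^ n * t₀) : ℝ) := Nat.cast_nonneg _
          nlinarith [pow_nonneg (by norm_num : (0:ℝ) ≤ 4⁻¹) (2 ^ n)]
        exact le_of_mul_le_mul_right hgoal h2m
  -- choose N beyond the maximum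
  obtain ⟨N, hN⟩ : ∃ N : ℕ, ∀ ε : Fin m → Bool, a ε < D ^ N * t₀ := by
    set M : ℝ := ∑ ε : Fin m → Bool, a ε with hM
    have hM0 : ∀ ε : Fin m → Bool, a ε ≤ M :=
      fun ε => Finset.single_le_sum (fun ε' _ => ha0 ε') (Finset.mem_univ ε)
    obtain ⟨N, hN⟩ := pow_unbounded_of_one_lt (M / t₀) hD1
    refine ⟨N, fun ε => ?_⟩
    have := (div_lt_iff₀ ht₀).mp hN
    calc a ε ≤ M := hM0 ε
      _ < D ^ N * t₀ := this
  -- pointwise shell bound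
  have hpoint : ∀ ε : Fin m → Bool, a ε ^ q
      ≤ E ^ 2 * t₀ ^ q + ∑ n ∈ Finset.range N,
          E ^ (n + 2) * t₀ ^ q * (if D ^ n * t₀ < a ε then 1 else 0) := by
    intro ε
    have hterm0 : ∀ n ∈ Finset.range N,
        (0 : ℝ) ≤ E ^ (n + 2) * t₀ ^ q * (if D ^ n * t₀ < a ε then 1 else 0) := by
      intro n _
      have : (0:ℝ) ≤ (if D ^ n * t₀ < a ε then (1:ℝ) else 0) := by positivity
      positivity
    by_cases h1 : a ε ≤ D * t₀
    · have h2 : a ε ^ q ≤ (D * t₀) ^ q :=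
        Real.rpow_le_rpow (ha0 ε) h1 hq.le
      have h3 : (D * t₀) ^ q = E * t₀ ^ q := by
        rw [Real.mul_rpow hD0.le ht₀.le, hEdef]
      have h4 : E * t₀ ^ q ≤ E ^ 2 * t₀ ^ q := by
        have ht₀q : 0 ≤ t₀ ^ q := Real.rpow_nonneg ht₀.le q
        nlinarith [mul_nonneg (mul_nonneg hE0.le ht₀q) (sub_nonneg.mpr hE1)]
      have h5 : (0:ℝ) ≤ ∑ n ∈ Finset.range N,
          E ^ (n + 2) * t₀ ^ q * (if D ^ n * t₀ < a ε then 1 else 0) :=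
        Finset.sum_nonneg hterm0
      linarith
    · push_neg at h1
      set P : ℕ → Prop := fun i => D ^ i * t₀ < a ε with hP
      have hP1 : P 1 := by
        rw [hP]
        simpa using h1
      have hN1 : 1 ≤ N := by
        by_contra hcon
        push_neg at hcon
        interval_cases N
        have h2 := hN ε
        rw [pow_zero, one_mul] at h2
        nlinarith
      set n₀ : ℕ := Nat.findGreatest P N with hn₀
      have hPn₀ : P n₀ := Nat.findGreatest_spec hN1 hP1
      have hn₀N : n₀ ≤ N := Nat.findGreatest_le N
      have hn₀lt : n₀ < N := by
        rcases lt_or_eq_of_le hn₀N with h | h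
        · exact h
        · exfalso
          have := hPn₀
          rw [h] at this
          exact absurd this (not_lt.mpr (hN ε).le)
      have hnot : ¬ P (n₀ + 1) :=
        Nat.findGreatest_is_greatest (Nat.lt_succ_self n₀) (by omega)
      have hupper : a ε ≤ D ^ (n₀ + 1) * t₀ := not_lt.mp hnot
      have h2 : a ε ^ q ≤ (D ^ (n₀ + 1) * t₀) ^ q :=
        Real.rpow_le_rpow (ha0 ε) hupper hq.le
      have h3 : (D ^ (n₀ + 1) * t₀) ^ q = E ^ (n₀ + 1) * t₀ ^ q := by
        rw [Real.mul_rpow (pow_nonneg hD0.le _) ht₀.le, pow_rpow_comm hD0.le, hEdef]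
      have h4 : E ^ (n₀ + 1) * t₀ ^ q ≤ E ^ (n₀ + 2) * t₀ ^ q := by
        have ht₀q : 0 ≤ t₀ ^ q := Real.rpow_nonneg ht₀.le q
        have : E ^ (n₀ + 1) ≤ E ^ (n₀ + 2) := pow_le_pow_right₀ hE1 (by omega)
        nlinarith
      have h5 : E ^ (n₀ + 2) * t₀ ^ q
          = E ^ (n₀ + 2) * t₀ ^ q * (if D ^ n₀ * t₀ < a ε then 1 else 0) := by
        rw [if_pos hPn₀, mul_one]
      have h6 : E ^ (n₀ + 2) * t₀ ^ q * (if D ^ n₀ * t₀ < a ε then 1 else 0)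
          ≤ ∑ n ∈ Finset.range N,
            E ^ (n + 2) * t₀ ^ q * (if D ^ n * t₀ < a ε then 1 else 0) :=
        Finset.single_le_sum hterm0 (Finset.mem_range.mpr hn₀lt)
      have h7 : (0:ℝ) ≤ E ^ 2 * t₀ ^ q := by
        have ht₀q : 0 ≤ t₀ ^ q := Real.rpow_nonneg ht₀.le q
        positivity
      linarith
  -- sum the pointwise bound
  have hsumq : ∑ ε : Fin m → Bool, a ε ^ q
      ≤ 2 ^ m * (E ^ 2 * t₀ ^ q) + ∑ n ∈ Finset.range N,
          E ^ (n + 2) * t₀ ^ q * (cnt (D ^ n * t₀) : ℝ) := by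
    calc ∑ ε : Fin m → Bool, a ε ^ q
        ≤ ∑ ε : Fin m → Bool, (E ^ 2 * t₀ ^ q + ∑ n ∈ Finset.range N,
            E ^ (n + 2) * t₀ ^ q * (if D ^ n * t₀ < a ε then 1 else 0)) :=
          Finset.sum_le_sum fun ε _ => hpoint ε
      _ = 2 ^ m * (E ^ 2 * t₀ ^ q) + ∑ ε : Fin m → Bool, ∑ n ∈ Finset.range N,
            E ^ (n + 2) * t₀ ^ q * (if D ^ n * t₀ < a ε then 1 else 0) := by
          rw [Finset.sum_add_distrib, Finset.sum_const, Finset.card_univ]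
          simp [nsmul_eq_mul, Fintype.card_fun]
      _ = 2 ^ m * (E ^ 2 * t₀ ^ q) + ∑ n ∈ Finset.range N,
            E ^ (n + 2) * t₀ ^ q * (cnt (D ^ n * t₀) : ℝ) := by
          congr 1
          rw [Finset.sum_comm]
          refine Finset.sum_congr rfl fun n _ => ?_
          rw [← Finset.mul_sum]
          congr 1
          rw [Finset.sum_boole]
  have hshell : ∑ n ∈ Finset.range N, E ^ (n + 2) * t₀ ^ q * (cnt (D ^ n * t₀) : ℝ)
      ≤ t₀ ^ q * 2 ^ m * B := by
    have ht₀q : 0 ≤ t₀ ^ q := Real.rpow_nonneg ht₀.le q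
    calc ∑ n ∈ Finset.range N, E ^ (n + 2) * t₀ ^ q * (cnt (D ^ n * t₀) : ℝ)
        ≤ ∑ n ∈ Finset.range N, E ^ (n + 2) * t₀ ^ q * ((4⁻¹:ℝ) ^ (2 ^ n) * 4⁻¹ * 2 ^ m) := by
          refine Finset.sum_le_sum fun n _ => ?_
          have h1 : (0:ℝ) ≤ E ^ (n + 2) * t₀ ^ q := by positivity
          exact mul_le_mul_of_nonneg_left (hiter n) h1
      _ ≤ ∑ n ∈ Finset.range N, t₀ ^ q * 2 ^ m * (E ^ (n + 2) * (4⁻¹:ℝ) ^ (2 ^ n)) := by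
          refine Finset.sum_le_sum fun n _ => ?_
          have h1 : (0:ℝ) ≤ E ^ (n + 2) := by positivity
          have h2 : (0:ℝ) ≤ (4⁻¹:ℝ) ^ (2 ^ n) := by positivity
          have hR : (0:ℝ) ≤ t₀ ^ q * 2 ^ m * (E ^ (n + 2) * (4⁻¹:ℝ) ^ (2 ^ n)) :=
            mul_nonneg (mul_nonneg ht₀q (by positivity)) (mul_nonneg h1 h2)
          have heq : E ^ (n + 2) * t₀ ^ q * ((4⁻¹:ℝ) ^ (2 ^ n) * 4⁻¹ * 2 ^ m)
              = t₀ ^ q * 2 ^ m * (E ^ (n + 2) * (4⁻¹:ℝ) ^ (2 ^ n)) * 4⁻¹ := by ring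
          rw [heq]
          linarith
      _ = t₀ ^ q * 2 ^ m * ∑ n ∈ Finset.range N, E ^ (n + 2) * (4⁻¹:ℝ) ^ (2 ^ n) := by
          rw [Finset.mul_sum]
      _ ≤ t₀ ^ q * 2 ^ m * B := by
          have hpart : ∑ n ∈ Finset.range N, E ^ (n + 2) * (4⁻¹:ℝ) ^ (2 ^ n) ≤ B :=
            Summable.sum_le_tsum _ (fun n _ => mul_nonneg (pow_nonneg hE0.le _)
              (pow_nonneg (by norm_num) _)) hBsum
          have : (0:ℝ) ≤ t₀ ^ q * 2 ^ m := by positivity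
          nlinarith
  -- put everything together
  have htq : t₀ ^ q = 16 ^ (q / p) * Avp ^ (q / p) := by
    rw [ht₀def, ← Real.rpow_mul (by linarith : (0:ℝ) ≤ 16 * Avp)]
    rw [show 1 / p * q = q / p by ring]
    exact Real.mul_rpow (by norm_num) hAvp0.le
  have hAq : ∑ ε : Fin m → Bool, a ε ^ q ≤ 2 ^ m * (t₀ ^ q * (E ^ 2 + B)) := by
    have ht₀q : 0 ≤ t₀ ^ q := Real.rpow_nonneg ht₀.le q
    calc ∑ ε : Fin m → Bool, a ε ^ q
        ≤ 2 ^ m * (E ^ 2 * t₀ ^ q) + ∑ n ∈ Finset.range N,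
            E ^ (n + 2) * t₀ ^ q * (cnt (D ^ n * t₀) : ℝ) := hsumq
      _ ≤ 2 ^ m * (E ^ 2 * t₀ ^ q) + t₀ ^ q * 2 ^ m * B := by linarith [hshell]
      _ = 2 ^ m * (t₀ ^ q * (E ^ 2 + B)) := by ring
  calc (2 ^ m : ℝ)⁻¹ * ∑ ε : Fin m → Bool, a ε ^ q
      ≤ (2 ^ m : ℝ)⁻¹ * (2 ^ m * (t₀ ^ q * (E ^ 2 + B))) := by
        exact mul_le_mul_of_nonneg_left hAq (by positivity)
    _ = t₀ ^ q * (E ^ 2 + B) := by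
        field_simp
    _ = 16 ^ (q / p) * (E ^ 2 + B) * Avp ^ (q / p) := by
        rw [htq]; ring

end Analytic

section Dyadic

lemma measurable_realSign : Measurable Real.sign := by
  have h : Real.sign = fun r : ℝ => if r < 0 then (-1 : ℝ) else if 0 < r then 1 else 0 := by
    funext r; rfl
  rw [h]
  refine Measurable.ite ?_ measurable_const (Measurable.ite ?_ measurable_const
    measurable_const)
  · exact measurableSet_lt measurable_id measurable_const
  · exact measurableSet_lt measurable_const measurable_id

lemma measurable_rademacher (k : ℕ) : Measurable (rademacher k) := by
  apply measurable_realSign.comp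
  exact Real.measurable_sin.comp (measurable_id.const_mul _)

lemma rademacher_mem (k : ℕ) (t : ℝ) :
    rademacher k t ∈ ({-1, 0, 1} : Set ℝ) := by
  rcases Real.sign_apply_eq (Real.sin (2 ^ (k + 1) * Real.pi * t)) with h | h | h <;>
    simp [rademacher, h]

/-- composing an arbitrary function with a finite-range measurable map is measurable -/
lemma measurable_F_comp {m : ℕ} (F : (Fin m → ℝ) → ℝ≥0∞) :
    Measurable (fun t : ℝ => F (fun k : Fin m => rademacher (k : ℕ) t)) := by
  set g : ℝ → (Fin m → ℝ) := fun t => fun k : Fin m => rademacher (k : ℕ) t with hg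
  have hgm : Measurable g :=
    measurable_pi_lambda _ (fun k => measurable_rademacher (k : ℕ))
  have hfin : (Set.range g).Finite := by
    have hfin3 : ({-1, 0, 1} : Set ℝ).Finite := (Set.finite_singleton 1).insert 0 |>.insert (-1)
    apply Set.Finite.subset (Set.Finite.pi (fun _ : Fin m => hfin3))
    rintro v ⟨t, rfl⟩
    intro k _
    exact rademacher_mem (k : ℕ) t
  intro s _
  have hpre : (fun t => F (g t)) ⁻¹' s = g ⁻¹' (F ⁻¹' s ∩ Set.range g) := by
    ext t
    simp [Set.mem_preimage, Set.mem_inter_iff, Set.mem_range]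
  rw [hpre, ← Set.biUnion_preimage_singleton]
  exact Set.Finite.measurableSet_biUnion (hfin.subset Set.inter_subset_right)
    (fun v _ => hgm (measurableSet_singleton v))

lemma rademacher_eq_on_Ioo {m k j : ℕ} (hk : k < m) (hj : j < 2 ^ m) {t : ℝ}
    (ht : t ∈ Set.Ioo ((j : ℝ) / 2 ^ m) (((j : ℝ) + 1) / 2 ^ m)) :
    rademacher k t = sg (Nat.testBit j (m - 1 - k)) := by
  set i : ℕ := m - 1 - k with hi
  set n : ℕ := j / 2 ^ i with hn
  have h2i : (0 : ℝ) < 2 ^ i := by positivity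
  have h2m' : (2 : ℝ) ^ m = 2 ^ (k + 1) * 2 ^ i := by
    rw [← pow_add]
    congr 1
    omega
  have h2k : (0 : ℝ) < 2 ^ (k + 1) := by positivity
  -- the key bracketing
  have hlow : (n : ℝ) < 2 ^ (k + 1) * t := by
    have h1 : (n : ℝ) * 2 ^ i ≤ j := by
      exact_mod_cast Nat.cast_le.mpr (Nat.div_mul_le_self j (2 ^ i))
    have h2 : (j : ℝ) / 2 ^ m < t := ht.1
    have h3 : (j : ℝ) < 2 ^ (k + 1) * t * 2 ^ i := by
      have := (div_lt_iff₀ (by positivity : (0:ℝ) < 2 ^ m)).mp h2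
      calc (j : ℝ) < t * 2 ^ m := this
        _ = 2 ^ (k + 1) * t * 2 ^ i := by rw [h2m']; ring
    have h4 : (n : ℝ) * 2 ^ i < 2 ^ (k + 1) * t * 2 ^ i := lt_of_le_of_lt h1 h3
    exact lt_of_mul_lt_mul_right h4 h2i.le
  have hhigh : 2 ^ (k + 1) * t < (n : ℝ) + 1 := by
    have h1 : j + 1 ≤ (n + 1) * 2 ^ i := by
      have hd := Nat.div_add_mod j (2 ^ i)
      have hm2 : j % 2 ^ i < 2 ^ i := Nat.mod_lt _ (Nat.pow_pos (by norm_num))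
      have : n * 2 ^ i + j % 2 ^ i = j := by rw [hn, mul_comm]; exact hd
      nlinarith [this, hm2]
    have h1' : (j : ℝ) + 1 ≤ ((n : ℝ) + 1) * 2 ^ i := by exact_mod_cast h1
    have h2 : t < ((j : ℝ) + 1) / 2 ^ m := ht.2
    have h3 : 2 ^ (k + 1) * t * 2 ^ i < (j : ℝ) + 1 := by
      have := (lt_div_iff₀ (by positivity : (0:ℝ) < 2 ^ m)).mp h2
      calc 2 ^ (k + 1) * t * 2 ^ i = t * 2 ^ m := by rw [h2m']; ring
        _ < (j : ℝ) + 1 := this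
    have h4 : 2 ^ (k + 1) * t * 2 ^ i < ((n : ℝ) + 1) * 2 ^ i := lt_of_lt_of_le h3 h1'
    exact lt_of_mul_lt_mul_right h4 h2i.le
  -- rewrite the sine
  set u : ℝ := 2 ^ (k + 1) * t - n with hu
  have hu0 : 0 < u := by rw [hu]; linarith
  have hu1 : u < 1 := by rw [hu]; linarith
  have harg : 2 ^ (k + 1) * Real.pi * t = Real.pi * u + (n : ℝ) * Real.pi := by
    rw [hu]; ring
  have hsin : Real.sin (2 ^ (k + 1) * Real.pi * t)
      = (-1) ^ n * Real.sin (Real.pi * u) := by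
    rw [harg, Real.sin_add_nat_mul_pi]
  have hsinpos : 0 < Real.sin (Real.pi * u) := by
    apply Real.sin_pos_of_pos_of_lt_pi
    · exact mul_pos Real.pi_pos hu0
    · nlinarith [Real.pi_pos]
  have htb : Nat.testBit j i = decide (n % 2 = 1) := by
    rw [Nat.testBit_eq_decide_div_mod_eq]
  rw [rademacher, hsin]
  rcases Nat.even_or_odd n with he | ho
  · have h1 : ((-1 : ℝ)) ^ n = 1 := he.neg_one_pow
    have h2 : n % 2 = 0 := Nat.even_iff.mp he
    rw [h1, one_mul, Real.sign_of_pos hsinpos, htb, h2]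
    simp [sg]
  · have h1 : ((-1 : ℝ)) ^ n = -1 := ho.neg_one_pow
    have h2 : n % 2 = 1 := Nat.odd_iff.mp ho
    rw [h1, htb, h2]
    have : (-1 : ℝ) * Real.sin (Real.pi * u) < 0 := by nlinarith
    rw [Real.sign_of_neg this]
    simp [sg]

set_option maxHeartbeats 1000000 in
lemma lintegral_rademacher (m : ℕ) (F : (Fin m → ℝ) → ℝ≥0∞) :
    ∫⁻ t in Set.Icc (0 : ℝ) 1, F (fun k : Fin m => rademacher (k : ℕ) t)
      = ∑ ε : Fin m → Bool, F (fun k => sg (ε k)) * (2 ^ m : ℝ≥0∞)⁻¹ := by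
  classical
  set U : ℕ → Set ℝ := fun j => Set.Ioo ((j : ℝ) / 2 ^ m) (((j : ℝ) + 1) / 2 ^ m) with hU
  have h2m : (0 : ℝ) < 2 ^ m := by positivity
  -- each piece is inside [0,1]
  have hUsub : ∀ j ∈ Finset.range (2 ^ m), U j ⊆ Set.Icc (0 : ℝ) 1 := by
    intro j hj t ht
    rw [Finset.mem_range] at hj
    obtain ⟨h1, h2⟩ := ht
    constructor
    · have : (0 : ℝ) ≤ (j : ℝ) / 2 ^ m := by positivity
      linarith
    · have hj1 : (j : ℝ) + 1 ≤ 2 ^ m := by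
        have : (j : ℕ) + 1 ≤ 2 ^ m := hj
        exact_mod_cast this
      have : ((j : ℝ) + 1) / 2 ^ m ≤ 1 := by
        rw [div_le_one h2m]
        exact hj1
      linarith
  -- a.e. equality of [0,1] with the union of the open dyadic intervals
  have hae : Set.Icc (0 : ℝ) 1 =ᵐ[volume] ⋃ j ∈ Finset.range (2 ^ m), U j := by
    rw [Filter.eventuallyEq_set]
    have hpts : volume (⋃ j ∈ Finset.range (2 ^ m + 1), {((j : ℝ) / 2 ^ m)}) = 0 := by
      apply Set.Countable.measure_zero
      exact (Set.countable_range fun j : ℕ => (j : ℝ) / 2 ^ m).mono (by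
        intro y hy
        simp only [Set.mem_iUnion, Set.mem_singleton_iff] at hy
        obtain ⟨j, _, rfl⟩ := hy
        exact Set.mem_range_self j)
    have hkey : ∀ᵐ t ∂(volume : Measure ℝ),
        t ∉ ⋃ j ∈ Finset.range (2 ^ m + 1), {((j : ℝ) / 2 ^ m)} := by
      rw [MeasureTheory.ae_iff]
      simp only [not_not]
      exact hpts
    filter_upwards [hkey] with t htp
    simp only [Set.mem_iUnion, Set.mem_singleton_iff, not_exists] at htp
    constructor
    · rintro ⟨ht0, ht1⟩
      have htne : ∀ j : ℕ, j < 2 ^ m + 1 → t ≠ (j : ℝ) / 2 ^ m := by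
        intro j hj
        have := htp j
        simp only [Finset.mem_range] at this
        exact fun h => this hj h
      have ht1' : t < 1 := by
        rcases lt_or_eq_of_le ht1 with h | h
        · exact h
        · exfalso
          apply htne (2 ^ m) (by omega)
          rw [h]
          field_simp
          norm_num
      set jn : ℕ := (⌊t * 2 ^ m⌋).toNat with hjn
      have hfl0 : (0 : ℤ) ≤ ⌊t * 2 ^ m⌋ := Int.floor_nonneg.mpr (by positivity)
      have hjncast : (jn : ℝ) = (⌊t * 2 ^ m⌋ : ℝ) := by
        rw [hjn]
        exact_mod_cast Int.toNat_of_nonneg hfl0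
      have hfl1 : (jn : ℝ) ≤ t * 2 ^ m := by
        rw [hjncast]; exact Int.floor_le _
      have hfl2 : t * 2 ^ m < (jn : ℝ) + 1 := by
        rw [hjncast]; exact Int.lt_floor_add_one _
      have hjlt : jn < 2 ^ m := by
        have h1 : t * 2 ^ m < 2 ^ m := by nlinarith
        have h2 : (jn : ℝ) < 2 ^ m := lt_of_le_of_lt hfl1 h1
        exact_mod_cast h2
      have hne : (jn : ℝ) ≠ t * 2 ^ m := by
        intro h
        apply htne jn (by omega)
        rw [eq_div_iff h2m.ne']
        exact h.symm
      rw [Set.mem_iUnion₂]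
      refine ⟨jn, Finset.mem_range.mpr hjlt, ?_⟩
      constructor
      · rw [div_lt_iff₀ h2m]
        exact lt_of_le_of_ne hfl1 hne
      · rw [lt_div_iff₀ h2m]
        exact hfl2
    · intro ht
      rw [Set.mem_iUnion₂] at ht
      obtain ⟨j, hj, htj⟩ := ht
      exact hUsub j hj htj
  rw [MeasureTheory.setLIntegral_congr hae]
  -- split into the finitely many intervals
  have hdisj : (↑(Finset.range (2 ^ m)) : Set ℕ).PairwiseDisjoint U := by
    intro j hj j' hj' hne
    have key : ∀ a b : ℕ, a < b → Disjoint (U a) (U b) := by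
      intro a b hab
      rw [Set.disjoint_left]
      intro t hta htb
      have h1 : t < ((a : ℝ) + 1) / 2 ^ m := hta.2
      have h2 : (b : ℝ) / 2 ^ m < t := htb.1
      have h3 : ((a : ℝ) + 1) ≤ (b : ℝ) := by exact_mod_cast hab
      have : ((a : ℝ) + 1) / 2 ^ m ≤ (b : ℝ) / 2 ^ m := by gcongr
      linarith
    rcases lt_or_gt_of_ne hne with h | h
    · exact key j j' h
    · exact (key j' j h).symm
  rw [MeasureTheory.lintegral_biUnion_finset hdisj
    (fun b _ => measurableSet_Ioo) _]
  -- compute each piece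
  have hpiece : ∀ j ∈ Finset.range (2 ^ m),
      ∫⁻ t in U j, F (fun k : Fin m => rademacher (k : ℕ) t)
        = F (fun k : Fin m => sg (Nat.testBit j (m - 1 - (k : ℕ)))) * (2 ^ m : ℝ≥0∞)⁻¹ := by
    intro j hj
    rw [Finset.mem_range] at hj
    have hc : ∀ t ∈ U j, F (fun k : Fin m => rademacher (k : ℕ) t)
        = F (fun k : Fin m => sg (Nat.testBit j (m - 1 - (k : ℕ)))) := by
      intro t ht
      congr 1
      funext k
      exact rademacher_eq_on_Ioo k.isLt hj ht
    rw [MeasureTheory.setLIntegral_congr_fun measurableSet_Ioo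
      (fun t ht => hc t ht), MeasureTheory.setLIntegral_const]
    congr 1
    simp only [Real.volume_Ioo]
    have harg : ((j : ℝ) + 1) / 2 ^ m - (j : ℝ) / 2 ^ m = ((2 : ℝ) ^ m)⁻¹ := by
      field_simp
      ring
    rw [harg]
    rw [ENNReal.ofReal_inv_of_pos h2m, ENNReal.ofReal_pow (by norm_num)]
    norm_num
  rw [Finset.sum_congr rfl hpiece]
  -- reindex by the sign pattern
  refine Finset.sum_bij (fun j _ => (fun k : Fin m => Nat.testBit j (m - 1 - (k : ℕ))))
    (fun j hj => Finset.mem_univ _) ?_ ?_ ?_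
  · -- injectivity
    intro j hj j' hj' heq
    rw [Finset.mem_range] at hj hj'
    apply Nat.eq_of_testBit_eq
    intro i
    by_cases him : i < m
    · have hcong := congrFun heq ⟨m - 1 - i, by omega⟩
      simpa [show m - 1 - (m - 1 - i) = i by omega] using hcong
    · push_neg at him
      have h1 : j < 2 ^ i := lt_of_lt_of_le hj (Nat.pow_le_pow_right (by norm_num) him)
      have h2 : j' < 2 ^ i := lt_of_lt_of_le hj' (Nat.pow_le_pow_right (by norm_num) him)
      rw [Nat.testBit_eq_false_of_lt h1, Nat.testBit_eq_false_of_lt h2]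
  · -- surjectivity
    intro ε hε
    have hcard : (Finset.univ : Finset (Fin m → Bool)).card
        ≤ (Finset.range (2 ^ m)).card := by
      rw [Finset.card_univ, Finset.card_range]
      simp [Fintype.card_fun]
    have := Finset.surj_on_of_inj_on_of_card_le
      (s := Finset.range (2 ^ m)) (t := (Finset.univ : Finset (Fin m → Bool)))
      (fun j _ => (fun k : Fin m => Nat.testBit j (m - 1 - (k : ℕ))))
      (fun j _ => Finset.mem_univ _)
      (fun j j' hj hj' heq => ?inj) hcard ε hε
    · obtain ⟨j, hj, hjeq⟩ := this
      exact ⟨j, hj, hjeq.symm⟩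
    case inj =>
      rw [Finset.mem_range] at hj hj'
      apply Nat.eq_of_testBit_eq
      intro i
      by_cases him : i < m
      · have hcong := congrFun heq ⟨m - 1 - i, by omega⟩
        simpa [show m - 1 - (m - 1 - i) = i by omega] using hcong
      · push_neg at him
        have h1 : j < 2 ^ i := lt_of_lt_of_le hj (Nat.pow_le_pow_right (by norm_num) him)
        have h2 : j' < 2 ^ i := lt_of_lt_of_le hj' (Nat.pow_le_pow_right (by norm_num) him)
        rw [Nat.testBit_eq_false_of_lt h1, Nat.testBit_eq_false_of_lt h2]
  · -- terms agree
    intro j hj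
    rfl

end Dyadic

section Final

lemma sum_ofReal_avg {m : ℕ} (G : (Fin m → Bool) → ℝ) (hG : ∀ ε, 0 ≤ G ε) :
    ∑ ε : Fin m → Bool, ENNReal.ofReal (G ε) * (2 ^ m : ℝ≥0∞)⁻¹
      = ENNReal.ofReal ((2 ^ m : ℝ)⁻¹ * ∑ ε : Fin m → Bool, G ε) := by
  rw [← Finset.sum_mul]
  rw [← ENNReal.ofReal_sum_of_nonneg (fun ε _ => hG ε)]
  have h2 : (2 ^ m : ℝ≥0∞)⁻¹ = ENNReal.ofReal ((2 ^ m : ℝ)⁻¹) := by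
    rw [ENNReal.ofReal_inv_of_pos (by positivity), ENNReal.ofReal_pow (by norm_num)]
    norm_num
  rw [h2, ← ENNReal.ofReal_mul (Finset.sum_nonneg (fun ε _ => hG ε)), mul_comm]

/-- one-sided comparison in normalized (real) form -/
lemma final_real (p q K : ℝ) (hp : 0 < p) (hq : 0 < q) (hK : 1 ≤ K) :
    ∃ C : ℝ, 0 < C ∧
      ∀ (X : Type) (_ : AddCommGroup X) (_ : Module ℝ X) (Q : X → ℝ),
        (∀ y, 0 ≤ Q y) → (∀ (c : ℝ) y, Q (c • y) = |c| * Q y) →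
        (∀ y z, Q (y + z) ≤ K * (Q y + Q z)) →
        ∀ (m : ℕ) (x : Fin m → X),
          ((2 ^ m : ℝ)⁻¹ * ∑ ε : Fin m → Bool, Q (Svec x ε) ^ q) ^ (1 / q)
            ≤ C * ((2 ^ m : ℝ)⁻¹ * ∑ ε : Fin m → Bool, Q (Svec x ε) ^ p) ^ (1 / p) := by
  obtain ⟨C₁, hC₁, H⟩ := discrete_kahane p q K hp hq hK
  refine ⟨C₁ ^ (1 / q), Real.rpow_pos_of_pos hC₁ _, ?_⟩
  intro X instG instM Q hQ0 hQh hQt m x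
  have h := H X instG instM Q hQ0 hQh hQt m x
  set Avq : ℝ := (2 ^ m : ℝ)⁻¹ * ∑ ε : Fin m → Bool, Q (Svec x ε) ^ q with hAvq
  set Avp : ℝ := (2 ^ m : ℝ)⁻¹ * ∑ ε : Fin m → Bool, Q (Svec x ε) ^ p with hAvp
  have hAvq0 : 0 ≤ Avq := by
    rw [hAvq]
    exact mul_nonneg (by positivity)
      (Finset.sum_nonneg fun ε _ => Real.rpow_nonneg (hQ0 _) _)
  have hAvp0 : 0 ≤ Avp := by
    rw [hAvp]
    exact mul_nonneg (by positivity)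
      (Finset.sum_nonneg fun ε _ => Real.rpow_nonneg (hQ0 _) _)
  calc Avq ^ (1 / q) ≤ (C₁ * Avp ^ (q / p)) ^ (1 / q) :=
        Real.rpow_le_rpow hAvq0 h (by positivity)
    _ = C₁ ^ (1 / q) * (Avp ^ (q / p)) ^ (1 / q) :=
        Real.mul_rpow hC₁.le (Real.rpow_nonneg hAvp0 _)
    _ = C₁ ^ (1 / q) * Avp ^ (1 / p) := by
        rw [← Real.rpow_mul hAvp0, show q / p * (1 / q) = 1 / p by
          field_simp [hp.ne', hq.ne']]

end Final

end KahaneDiscrete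

/-- Kahane's inequality: for `0 < p, q < ∞` there are constants, depending only on `p, q`
and the modulus of concavity `K` of the quasinorm, such that for every finite sequence
`(x_k)` in a quasi-normed space `X`,
`(∫₀¹ ‖∑ r_k(t) x_k‖^q dt)^{1/q} ≍ (∫₀¹ ‖∑ r_k(t) x_k‖^p dt)^{1/p}`. -/
theorem stmt6 (p q : ℝ) (hp : 0 < p) (hq : 0 < q) (K : ℝ) (hK : 1 ≤ K) :
    ∃ c C : ℝ, 0 < c ∧ 0 < C ∧
      ∀ (X : Type) (_ : AddCommGroup X) (_ : Module ℝ X) (Q : X → ℝ),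
        (∀ x, 0 ≤ Q x) →
        (∀ (a : ℝ) (x : X), Q (a • x) = |a| * Q x) →
        (∀ x y : X, Q (x + y) ≤ K * (Q x + Q y)) →
        ∀ (m : ℕ) (x : Fin m → X),
          ENNReal.ofReal c *
              (∫⁻ t in Set.Icc (0 : ℝ) 1,
                ENNReal.ofReal ((Q (∑ k : Fin m, rademacher k.val t • x k)) ^ p)) ^ (1 / p) ≤
            (∫⁻ t in Set.Icc (0 : ℝ) 1,
                ENNReal.ofReal ((Q (∑ k : Fin m, rademacher k.val t • x k)) ^ q)) ^ (1 / q) ∧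
          (∫⁻ t in Set.Icc (0 : ℝ) 1,
                ENNReal.ofReal ((Q (∑ k : Fin m, rademacher k.val t • x k)) ^ q)) ^ (1 / q) ≤
            ENNReal.ofReal C *
              (∫⁻ t in Set.Icc (0 : ℝ) 1,
                ENNReal.ofReal ((Q (∑ k : Fin m, rademacher k.val t • x k)) ^ p)) ^ (1 / p) := by
  obtain ⟨Cu, hCu, Hu⟩ := final_real p q K hp hq hK
  obtain ⟨Cl, hCl, Hl⟩ := final_real q p K hq hp hK
  refine ⟨Cl⁻¹, Cu, by positivity, hCu, ?_⟩
  intro X instG instM Q hQ0 hQh hQt m x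
  have hu := Hu X instG instM Q hQ0 hQh hQt m x
  have hl := Hl X instG instM Q hQ0 hQh hQt m x
  have hAvq0 : 0 ≤ (2 ^ m : ℝ)⁻¹ * ∑ ε : Fin m → Bool, Q (Svec x ε) ^ q :=
    mul_nonneg (by positivity) (Finset.sum_nonneg fun ε _ => Real.rpow_nonneg (hQ0 _) _)
  have hAvp0 : 0 ≤ (2 ^ m : ℝ)⁻¹ * ∑ ε : Fin m → Bool, Q (Svec x ε) ^ p :=
    mul_nonneg (by positivity) (Finset.sum_nonneg fun ε _ => Real.rpow_nonneg (hQ0 _) _)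
  -- identify the integrals with discrete averages
  have hip : (∫⁻ t in Set.Icc (0 : ℝ) 1,
      ENNReal.ofReal ((Q (∑ k : Fin m, rademacher k.val t • x k)) ^ p))
      = ENNReal.ofReal ((2 ^ m : ℝ)⁻¹ * ∑ ε : Fin m → Bool, Q (Svec x ε) ^ p) := by
    have h1 := lintegral_rademacher m
      (fun v => ENNReal.ofReal ((Q (∑ k : Fin m, v k • x k)) ^ p))
    rw [h1]
    exact sum_ofReal_avg (fun ε => Q (Svec x ε) ^ p)
      (fun ε => Real.rpow_nonneg (hQ0 _) _)
  have hiq : (∫⁻ t in Set.Icc (0 : ℝ) 1,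
      ENNReal.ofReal ((Q (∑ k : Fin m, rademacher k.val t • x k)) ^ q))
      = ENNReal.ofReal ((2 ^ m : ℝ)⁻¹ * ∑ ε : Fin m → Bool, Q (Svec x ε) ^ q) := by
    have h1 := lintegral_rademacher m
      (fun v => ENNReal.ofReal ((Q (∑ k : Fin m, v k • x k)) ^ q))
    rw [h1]
    exact sum_ofReal_avg (fun ε => Q (Svec x ε) ^ q)
      (fun ε => Real.rpow_nonneg (hQ0 _) _)
  rw [hip, hiq]
  rw [ENNReal.ofReal_rpow_of_nonneg hAvp0 (by positivity : (0:ℝ) ≤ 1 / p),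
    ENNReal.ofReal_rpow_of_nonneg hAvq0 (by positivity : (0:ℝ) ≤ 1 / q)]
  constructor
  · rw [← ENNReal.ofReal_mul (by positivity : (0:ℝ) ≤ Cl⁻¹)]
    apply ENNReal.ofReal_le_ofReal
    have h2 := mul_le_mul_of_nonneg_left hl (inv_nonneg.mpr hCl.le)
    rw [← mul_assoc, inv_mul_cancel₀ hCl.ne', one_mul] at h2
    exact h2
  · rw [← ENNReal.ofReal_mul hCu.le]
    exact ENNReal.ofReal_le_ofReal hu
end
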